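/- arXiv:2007.14430 — 8 statements merged into one kernel-verified Lean document; each statement's English description precedes it below -/
import Mathlib

section
/- Let A be a nonempty finite set and τ > 0. For all q₁, q₂ : A → ℝ, |τ·ln(∑_{a∈A} exp(q₁(a)/τ)) − τ·ln(∑_{a∈A} exp(q₂(a)/τ))| ≤ max_{a∈A} |q₁(a) − q₂(a)|. -/
lemma lse_one_side {A : Type*} [Fintype A] [Nonempty A] (τ : ℝ) (hτ : 0 < τ) (q₁ q₂ : A → ℝ)
    (M : ℝ) (hM : ∀ a, q₁ a - q₂ a ≤ M) :
    τ * Real.log (∑ a, Real.exp (q₁ a / τ)) - τ * Real.log (∑ a, Real.exp (q₂ a / τ)) ≤ M := by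
  have hpos : (0:ℝ) < ∑ a, Real.exp (q₂ a / τ) :=
    Finset.sum_pos (fun a _ => Real.exp_pos _) Finset.univ_nonempty
  have hle : (∑ a, Real.exp (q₁ a / τ)) ≤ Real.exp (M / τ) * ∑ a, Real.exp (q₂ a / τ) := by
    rw [Finset.mul_sum]
    refine Finset.sum_le_sum fun a _ => ?_
    rw [← Real.exp_add]
    apply Real.exp_le_exp.2
    rw [← add_div, div_le_div_iff_of_pos_right hτ]
    linarith [hM a]
  have hlog : Real.log (∑ a, Real.exp (q₁ a / τ)) ≤ M / τ + Real.log (∑ a, Real.exp (q₂ a / τ)) := by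
    calc Real.log (∑ a, Real.exp (q₁ a / τ))
        ≤ Real.log (Real.exp (M / τ) * ∑ a, Real.exp (q₂ a / τ)) :=
          Real.log_le_log (Finset.sum_pos (fun a _ => Real.exp_pos _) Finset.univ_nonempty) hle
      _ = M / τ + Real.log (∑ a, Real.exp (q₂ a / τ)) := by
          rw [Real.log_mul (Real.exp_ne_zero _) (ne_of_gt hpos), Real.log_exp]
  have := mul_le_mul_of_nonneg_left hlog (le_of_lt hτ)
  rw [mul_add, mul_div_cancel₀ _ (ne_of_gt hτ)] at this
  linarith

/-- Nonexpansiveness (in sup norm) of the scaled log-sum-exp: for a nonempty finite set `A`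
and `τ > 0`, for all `q₁ q₂ : A → ℝ`,
`|τ ln ∑ₐ exp(q₁ a / τ) − τ ln ∑ₐ exp(q₂ a / τ)| ≤ maxₐ |q₁ a − q₂ a|`. -/
theorem stmt_1 {A : Type*} [Fintype A] [Nonempty A] (τ : ℝ) (hτ : 0 < τ) (q₁ q₂ : A → ℝ) :
    |τ * Real.log (∑ a, Real.exp (q₁ a / τ)) - τ * Real.log (∑ a, Real.exp (q₂ a / τ))|
      ≤ Finset.univ.sup' Finset.univ_nonempty (fun a => |q₁ a - q₂ a|) := by
  set M := Finset.univ.sup' Finset.univ_nonempty (fun a => |q₁ a - q₂ a|) with hMdef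
  have hM : ∀ a, |q₁ a - q₂ a| ≤ M := fun a =>
    Finset.le_sup' (fun a => |q₁ a - q₂ a|) (Finset.mem_univ a)
  rw [abs_sub_le_iff]
  constructor
  · exact lse_one_side τ hτ q₁ q₂ M fun a => (abs_le.1 (hM a)).2
  · exact lse_one_side τ hτ q₂ q₁ M fun a => by
      have := (abs_le.1 (hM a)).1; linarith
end

section
/- Let S and A be nonempty finite sets, r : S×A → ℝ, γ ∈ (0,1), P a transition kernel, α, τ ∈ ℝ, ε : S×A → ℝ, let π_k, π_{k+1} be full-support policies, and let q_k, q_{k+1} : S×A → ℝ. Set q'_k = q_k − ατ·ln π_k and q'_{k+1} = q_{k+1} − ατ·ln π_{k+1}. Then the identity q_{k+1} = r + ατ·ln π_{k+1} + γ·P⟨π_{k+1}, q_k − τ·ln π_{k+1}⟩ + ε holds if and only if q'_{k+1} = r + γ·P(⟨π_{k+1}, q'_k⟩ − ατ·KL(π_{k+1}‖π_k) + (1−α)·τ·H(π_{k+1})) + ε. -/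
/-- Evaluation-step identity in the proof of Theorem 1: with `q'_k = q_k − ατ ln π_k`
and `q'_{k+1} = q_{k+1} − ατ ln π_{k+1}`, the Munchausen update
`q_{k+1} = r + ατ ln π_{k+1} + γ P⟨π_{k+1}, q_k − τ ln π_{k+1}⟩ + ε`
holds iff the Mirror-Descent update
`q'_{k+1} = r + γ P(⟨π_{k+1}, q'_k⟩ − ατ KL(π_{k+1}‖π_k) + (1−α)τ H(π_{k+1})) + ε` holds. -/
theorem stmt_8 {S A : Type*} [Fintype S] [Fintype A] [Nonempty S] [Nonempty A]
    (r : S × A → ℝ) (γ : ℝ) (hγ : γ ∈ Set.Ioo (0 : ℝ) 1)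
    (P : S × A → S → ℝ) (hP0 : ∀ sa s', 0 ≤ P sa s') (hP1 : ∀ sa, ∑ s', P sa s' = 1)
    (α τ : ℝ) (ε : S × A → ℝ)
    (πk πk1 : S → A → ℝ)
    (hπk0 : ∀ s a, 0 < πk s a) (hπk1 : ∀ s, ∑ a, πk s a = 1)
    (hπk10 : ∀ s a, 0 < πk1 s a) (hπk11 : ∀ s, ∑ a, πk1 s a = 1)
    (qk qk1 : S × A → ℝ)
    (q'k : S × A → ℝ) (hq'k : ∀ s a, q'k (s, a) = qk (s, a) - α * τ * Real.log (πk s a))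
    (q'k1 : S × A → ℝ)
    (hq'k1 : ∀ s a, q'k1 (s, a) = qk1 (s, a) - α * τ * Real.log (πk1 s a)) :
    (∀ s a, qk1 (s, a)
        = r (s, a) + α * τ * Real.log (πk1 s a)
          + γ * ∑ s', P (s, a) s' *
              (∑ a', πk1 s' a' * (qk (s', a') - τ * Real.log (πk1 s' a')))
          + ε (s, a)) ↔
    (∀ s a, q'k1 (s, a)
        = r (s, a)
          + γ * ∑ s', P (s, a) s' *
              ((∑ a', πk1 s' a' * q'k (s', a'))
                - α * τ * (∑ a', πk1 s' a' * Real.log (πk1 s' a' / πk s' a'))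
                + (1 - α) * τ * (-∑ a', πk1 s' a' * Real.log (πk1 s' a')))
          + ε (s, a)) := by
  have key : ∀ s' : S,
      (∑ a', πk1 s' a' * q'k (s', a'))
        - α * τ * (∑ a', πk1 s' a' * Real.log (πk1 s' a' / πk s' a'))
        + (1 - α) * τ * (-∑ a', πk1 s' a' * Real.log (πk1 s' a'))
      = ∑ a', πk1 s' a' * (qk (s', a') - τ * Real.log (πk1 s' a')) := by
    intro s'
    have hlog : ∀ a', Real.log (πk1 s' a' / πk s' a')
        = Real.log (πk1 s' a') - Real.log (πk s' a') := fun a' =>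
      Real.log_div (ne_of_gt (hπk10 s' a')) (ne_of_gt (hπk0 s' a'))
    simp only [hq'k, hlog]
    simp only [Finset.mul_sum, ← Finset.sum_neg_distrib]
    rw [← Finset.sum_sub_distrib, ← Finset.sum_add_distrib]
    exact Finset.sum_congr rfl fun a' _ => by ring
  constructor
  · intro h s a
    rw [hq'k1]
    simp only [key, h s a]
    ring
  · intro h s a
    have := h s a
    rw [hq'k1] at this
    simp only [key] at this
    linarith [this]
end

section
/- (Theorem 1.) Let S and A be nonempty finite sets, r : S×A → ℝ, γ ∈ (0,1), P a transition kernel, τ > 0 and α ∈ [0,1]. Let (π_k, q_k)_{k≥0} be the M-VI(α,τ) sequence started from a full-support policy π₀, an initial q₀, and errors (ε_k)_{k≥1}, and set q'_k = q_k − ατ·ln π_k for all k ≥ 0. Then for every k ≥ 0: (i) for each s ∈ S, π_{k+1}(s) is the unique maximizer over probability vectors π on A of π ↦ ∑_a π(a)·q'_k(s,a) − ατ·KL(π‖π_k(s)) + (1−α)·τ·H(π); and (ii) q'_{k+1} = r + γ·P(⟨π_{k+1}, q'_k⟩ − ατ·KL(π_{k+1}‖π_k) + (1−α)·τ·H(π_{k+1}))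 + ε_{k+1}. In other words, M-VI(α,τ) produces exactly the iterates of Mirror Descent Value Iteration MD-VI(ατ, (1−α)τ) started from π₀ and q'₀. -/
lemma term_ge {p σ : ℝ} (hp : 0 ≤ p) (hσ : 0 < σ) :
    p - σ ≤ p * Real.log (p / σ) := by
  rcases eq_or_lt_of_le hp with h | h
  · simp [← h]; linarith
  · have hd : 0 < σ / p := div_pos hσ h
    have h1 := Real.log_le_sub_one_of_pos hd
    have hlog : Real.log (p / σ) = - Real.log (σ / p) := by
      rw [← Real.log_inv, inv_div]
    have hps : p * (σ / p) = σ := by field_simp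
    nlinarith

lemma gibbs {A : Type*} [Fintype A] (p σ : A → ℝ)
    (hp0 : ∀ a, 0 ≤ p a) (hσ0 : ∀ a, 0 < σ a)
    (hp1 : ∑ a, p a = 1) (hσ1 : ∑ a, σ a = 1) :
    0 ≤ ∑ a, p a * Real.log (p a / σ a) ∧
      ((∑ a, p a * Real.log (p a / σ a)) = 0 → p = σ) := by
  have hterm : ∀ a, p a - σ a ≤ p a * Real.log (p a / σ a) :=
    fun a => term_ge (hp0 a) (hσ0 a)
  have hsum : ∑ a, (p a - σ a) ≤ ∑ a, p a * Real.log (p a / σ a) :=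
    Finset.sum_le_sum fun a _ => hterm a
  have hzero : ∑ a, (p a - σ a) = 0 := by
    rw [Finset.sum_sub_distrib, hp1, hσ1]; ring
  refine ⟨by linarith, fun heq => ?_⟩
  have hz : ∑ a, (p a * Real.log (p a / σ a) - (p a - σ a)) = 0 := by
    rw [Finset.sum_sub_distrib, heq, hzero]; ring
  have hall := (Finset.sum_eq_zero_iff_of_nonneg
    (fun a _ => by linarith [hterm a])).mp hz
  funext a
  have ha : p a * Real.log (p a / σ a) = p a - σ a := by
    have := hall a (Finset.mem_univ a); linarith
  rcases eq_or_lt_of_le (hp0 a) with h | h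
  · exfalso; rw [← h] at ha; simp at ha; linarith [hσ0 a]
  · by_contra hne
    have hd : 0 < σ a / p a := div_pos (hσ0 a) h
    have hne1 : σ a / p a ≠ 1 := by
      intro h1
      exact hne ((div_eq_one_iff_eq h.ne').mp h1).symm
    have h1 := Real.log_lt_sub_one_of_pos hd hne1
    have hlog : Real.log (p a / σ a) = - Real.log (σ a / p a) := by
      rw [← Real.log_inv, inv_div]
    have hps : p a * (σ a / p a) = σ a := by field_simp
    nlinarith

lemma obj_simp {A : Type*} [Fintype A] (p πk Q : A → ℝ) (α τ : ℝ)
    (hp0 : ∀ a, 0 ≤ p a) (hk0 : ∀ a, 0 < πk a) :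
    (∑ a, p a * (Q a - α * τ * Real.log (πk a)))
      - α * τ * (∑ a, p a * Real.log (p a / πk a))
      + (1 - α) * τ * (-∑ a, p a * Real.log (p a))
    = (∑ a, p a * Q a) - τ * ∑ a, p a * Real.log (p a) := by
  have h1 : ∑ a, p a * Real.log (p a / πk a)
      = (∑ a, p a * Real.log (p a)) - ∑ a, p a * Real.log (πk a) := by
    rw [← Finset.sum_sub_distrib]
    refine Finset.sum_congr rfl fun a _ => ?_
    rcases eq_or_lt_of_le (hp0 a) with h | h
    · simp [← h]
    · rw [Real.log_div h.ne' (hk0 a).ne']; ring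
  have h2 : ∑ a, p a * (Q a - α * τ * Real.log (πk a))
      = (∑ a, p a * Q a) - α * τ * ∑ a, p a * Real.log (πk a) := by
    rw [Finset.mul_sum, ← Finset.sum_sub_distrib]
    exact Finset.sum_congr rfl fun a _ => by ring
  rw [h1, h2]; ring

lemma key {A : Type*} [Fintype A] [Nonempty A] (Q p : A → ℝ) (τ : ℝ) (hτ : 0 < τ)
    (hp0 : ∀ a, 0 ≤ p a) (hp1 : ∑ a, p a = 1) :
    ((∑ a, p a * Q a) - τ * ∑ a, p a * Real.log (p a)
      ≤ (∑ a, (Real.exp (Q a / τ) / ∑ a', Real.exp (Q a' / τ)) * Q a)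
        - τ * ∑ a, (Real.exp (Q a / τ) / ∑ a', Real.exp (Q a' / τ))
            * Real.log (Real.exp (Q a / τ) / ∑ a', Real.exp (Q a' / τ))) ∧
    ((∑ a, p a * Q a) - τ * ∑ a, p a * Real.log (p a)
      = (∑ a, (Real.exp (Q a / τ) / ∑ a', Real.exp (Q a' / τ)) * Q a)
        - τ * ∑ a, (Real.exp (Q a / τ) / ∑ a', Real.exp (Q a' / τ))
            * Real.log (Real.exp (Q a / τ) / ∑ a', Real.exp (Q a' / τ))
      → p = fun a => Real.exp (Q a / τ) / ∑ a', Real.exp (Q a' / τ)) := by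
  set Z := ∑ a', Real.exp (Q a' / τ) with hZdef
  have hZ : 0 < Z := Finset.sum_pos (fun _ _ => Real.exp_pos _) Finset.univ_nonempty
  set σ : A → ℝ := fun a => Real.exp (Q a / τ) / Z with hσdef
  have hσ0 : ∀ a, 0 < σ a := fun a => div_pos (Real.exp_pos _) hZ
  have hσ1 : ∑ a, σ a = 1 := by
    simp only [hσdef, ← Finset.sum_div]
    exact div_self hZ.ne'
  have hlogσ : ∀ a, Real.log (σ a) = Q a / τ - Real.log Z := fun a => by
    rw [hσdef]; rw [Real.log_div (Real.exp_ne_zero _) hZ.ne', Real.log_exp]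
  have hgp : ∀ f : A → ℝ, (∀ a, 0 ≤ f a) → (∑ a, f a = 1) →
      (∑ a, f a * Q a) - τ * ∑ a, f a * Real.log (f a)
        = τ * Real.log Z - τ * ∑ a, f a * Real.log (f a / σ a) := by
    intro f hf0 hf1
    have h1 : ∑ a, f a * Real.log (f a / σ a)
        = (∑ a, f a * Real.log (f a)) - ∑ a, f a * Real.log (σ a) := by
      rw [← Finset.sum_sub_distrib]
      refine Finset.sum_congr rfl fun a _ => ?_
      rcases eq_or_lt_of_le (hf0 a) with h | h
      · simp [← h]
      · rw [Real.log_div h.ne' (hσ0 a).ne']; ring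
    have h2 : ∑ a, f a * Real.log (σ a) = (∑ a, f a * Q a) / τ - Real.log Z := by
      have : ∀ a, f a * Real.log (σ a) = f a * Q a / τ - f a * Real.log Z := fun a => by
        rw [hlogσ a]; ring
      rw [Finset.sum_congr rfl fun a _ => this a, Finset.sum_sub_distrib,
        ← Finset.sum_div, ← Finset.sum_mul, hf1]
      ring
    rw [h1, h2]
    field_simp
    ring
  have hKLσ : ∑ a, σ a * Real.log (σ a / σ a) = 0 := by
    refine Finset.sum_eq_zero fun a _ => ?_
    rw [div_self (hσ0 a).ne', Real.log_one, mul_zero]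
  have hgσ : (∑ a, σ a * Q a) - τ * ∑ a, σ a * Real.log (σ a) = τ * Real.log Z := by
    rw [hgp σ (fun a => (hσ0 a).le) hσ1, hKLσ]; ring
  have hgpp := hgp p hp0 hp1
  obtain ⟨hKL, hKLeq⟩ := gibbs p σ hp0 hσ0 hp1 hσ1
  constructor
  · rw [hgpp, hgσ]; nlinarith
  · intro heq
    rw [hgpp, hgσ] at heq
    have : ∑ a, p a * Real.log (p a / σ a) = 0 := by
      have := mul_left_cancel₀ hτ.ne' (by linarith : τ * ∑ a, p a * Real.log (p a / σ a) = τ * 0)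
      linarith [this]
    exact hKLeq this
/-- Theorem 1: the Munchausen Value Iteration sequence M-VI(α,τ), given by
`π_{k+1} = softmax(q_k/τ)` and
`q_{k+1} = r + ατ ln π_{k+1} + γ P⟨π_{k+1}, q_k − τ ln π_{k+1}⟩ + ε_{k+1}`,
is, in terms of `q'_k = q_k − ατ ln π_k`, exactly Mirror Descent Value Iteration
MD-VI(ατ, (1−α)τ): (i) for each `s`, `π_{k+1}(s)` is the unique maximizer over the simplex
of `π ↦ ⟨π, q'_k(s,·)⟩ − ατ KL(π‖π_k(s)) + (1−α)τ H(π)`, and (ii)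
`q'_{k+1} = r + γ P(⟨π_{k+1}, q'_k⟩ − ατ KL(π_{k+1}‖π_k) + (1−α)τ H(π_{k+1})) + ε_{k+1}`. -/
theorem stmt_9 {S A : Type*} [Fintype S] [Fintype A] [Nonempty S] [Nonempty A]
    (r : S × A → ℝ) (γ : ℝ) (hγ : γ ∈ Set.Ioo (0 : ℝ) 1)
    (P : S × A → S → ℝ) (hP0 : ∀ sa s', 0 ≤ P sa s') (hP1 : ∀ sa, ∑ s', P sa s' = 1)
    (τ : ℝ) (hτ : 0 < τ) (α : ℝ) (hα : α ∈ Set.Icc (0 : ℝ) 1)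
    (π : ℕ → S → A → ℝ) (q : ℕ → S × A → ℝ) (ε : ℕ → S × A → ℝ)
    (hπ00 : ∀ s a, 0 < π 0 s a) (hπ01 : ∀ s, ∑ a, π 0 s a = 1)
    (hπ : ∀ k s a, π (k + 1) s a
      = Real.exp (q k (s, a) / τ) / ∑ a', Real.exp (q k (s, a') / τ))
    (hq : ∀ k s a, q (k + 1) (s, a)
      = r (s, a) + α * τ * Real.log (π (k + 1) s a)
        + γ * ∑ s', P (s, a) s' *
            (∑ a', π (k + 1) s' a' * (q k (s', a') - τ * Real.log (π (k + 1) s' a')))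
        + ε (k + 1) (s, a))
    (q' : ℕ → S × A → ℝ)
    (hq' : ∀ k s a, q' k (s, a) = q k (s, a) - α * τ * Real.log (π k s a)) :
    ∀ k : ℕ,
      (∀ s : S, ∀ p : A → ℝ, (∀ a, 0 ≤ p a) → (∑ a, p a = 1) →
        ((∑ a, p a * q' k (s, a))
            - α * τ * (∑ a, p a * Real.log (p a / π k s a))
            + (1 - α) * τ * (-∑ a, p a * Real.log (p a))
          ≤ (∑ a, π (k + 1) s a * q' k (s, a))
            - α * τ * (∑ a, π (k + 1) s a * Real.log (π (k + 1) s a / π k s a))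
            + (1 - α) * τ * (-∑ a, π (k + 1) s a * Real.log (π (k + 1) s a))) ∧
        ((∑ a, p a * q' k (s, a))
            - α * τ * (∑ a, p a * Real.log (p a / π k s a))
            + (1 - α) * τ * (-∑ a, p a * Real.log (p a))
          = (∑ a, π (k + 1) s a * q' k (s, a))
            - α * τ * (∑ a, π (k + 1) s a * Real.log (π (k + 1) s a / π k s a))
            + (1 - α) * τ * (-∑ a, π (k + 1) s a * Real.log (π (k + 1) s a))
          → p = π (k + 1) s)) ∧
      (∀ s a, q' (k + 1) (s, a)
        = r (s, a)
          + γ * ∑ s', P (s, a) s' *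
              ((∑ a', π (k + 1) s' a' * q' k (s', a'))
                - α * τ * (∑ a', π (k + 1) s' a' * Real.log (π (k + 1) s' a' / π k s' a'))
                + (1 - α) * τ * (-∑ a', π (k + 1) s' a' * Real.log (π (k + 1) s' a')))
          + ε (k + 1) (s, a)) := by
  have hpos : ∀ k s a, 0 < π k s a := by
    intro k
    cases k with
    | zero => exact hπ00
    | succ k =>
      intro s a
      rw [hπ]
      exact div_pos (Real.exp_pos _)
        (Finset.sum_pos (fun _ _ => Real.exp_pos _) Finset.univ_nonempty)
  intro k
  constructor
  · intro s p hp0 hp1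
    have hps := obj_simp p (π k s) (fun x => q k (s, x)) α τ hp0 (hpos k s)
    have hπs := obj_simp (π (k + 1) s) (π k s) (fun x => q k (s, x)) α τ
      (fun a => (hpos (k + 1) s a).le) (hpos k s)
    try simp only [] at hps hπs
    obtain ⟨h1, h2⟩ := key (fun x => q k (s, x)) p τ hτ hp0 hp1
    try simp only [] at h1 h2
    constructor
    · simp only [hq']
      rw [hps, hπs]
      simp only [hπ]
      exact h1
    · intro heq
      simp only [hq'] at heq
      rw [hps, hπs] at heq
      simp only [hπ] at heq
      funext a
      rw [hπ]
      exact congrFun (h2 heq) a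
  · intro s a
    have hinner : ∀ s', (∑ a', π (k + 1) s' a' * (q k (s', a') - τ * Real.log (π (k + 1) s' a')))
        = (∑ a', π (k + 1) s' a' * q' k (s', a'))
          - α * τ * (∑ a', π (k + 1) s' a' * Real.log (π (k + 1) s' a' / π k s' a'))
          + (1 - α) * τ * (-∑ a', π (k + 1) s' a' * Real.log (π (k + 1) s' a')) := by
      intro s'
      have e1 : ∑ a', π (k + 1) s' a' * (q k (s', a') - τ * Real.log (π (k + 1) s' a'))
          = (∑ a', π (k + 1) s' a' * q k (s', a'))
            - τ * ∑ a', π (k + 1) s' a' * Real.log (π (k + 1) s' a') := by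
        rw [Finset.mul_sum, ← Finset.sum_sub_distrib]
        exact Finset.sum_congr rfl fun _ _ => by ring
      have e2 := obj_simp (π (k + 1) s') (π k s') (fun x => q k (s', x)) α τ
        (fun a' => (hpos (k + 1) s' a').le) (hpos k s')
      try simp only [] at e2
      simp only [hq']
      rw [e1]
      exact e2.symm
    have hsum : ∑ s', P (s, a) s' *
          (∑ a', π (k + 1) s' a' * (q k (s', a') - τ * Real.log (π (k + 1) s' a')))
        = ∑ s', P (s, a) s' *
          ((∑ a', π (k + 1) s' a' * q' k (s', a'))
            - α * τ * (∑ a', π (k + 1) s' a' * Real.log (π (k + 1) s' a' / π k s' a'))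
            + (1 - α) * τ * (-∑ a', π (k + 1) s' a' * Real.log (π (k + 1) s' a'))) :=
      Finset.sum_congr rfl fun s' _ => by rw [hinner s']
    rw [hq' (k + 1) s a, hq k s a, hsum]
    ring
end

section
/- Let S and A be nonempty finite sets, r : S×A → ℝ, γ ∈ (0,1), P a transition kernel, τ > 0, α ∈ ℝ, and q_k : S×A → ℝ. Let π_{k+1} = softmax(q_k/τ) and define lse_k(s) = τ·ln(∑_{a} exp(q_k(s,a)/τ)). Then, pointwise on S×A: r + ατ·ln π_{k+1} + γ·P⟨π_{k+1}, q_k − τ·ln π_{k+1}⟩ = r + γ·P(lse_k) + α·(q_k − P̃lse_k), where P̃lse_k(s,a) := lse_k(s); that is, the Munchausen evaluation update equals the Conservative Value Iteration-type update r(s,a) + γ·∑_{s'} P(s,a)(s')·lse_k(s') + α·(q_k(s,a) − lse_k(s)). -/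
/-- Equation (5): with `π_{k+1} = softmax(q_k/τ)` and
`lse_k(s) = τ ln ∑ₐ exp(q_k(s,a)/τ)`, the Munchausen evaluation update equals the
Conservative Value Iteration-type update
`r(s,a) + γ ∑_{s'} P(s,a)(s') lse_k(s') + α (q_k(s,a) − lse_k(s))`, pointwise on `S × A`. -/
theorem stmt_10 {S A : Type*} [Fintype S] [Fintype A] [Nonempty S] [Nonempty A]
    (r : S × A → ℝ) (γ : ℝ) (hγ : γ ∈ Set.Ioo (0 : ℝ) 1)
    (P : S × A → S → ℝ) (hP0 : ∀ sa s', 0 ≤ P sa s') (hP1 : ∀ sa, ∑ s', P sa s' = 1)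
    (τ : ℝ) (hτ : 0 < τ) (α : ℝ) (qk : S × A → ℝ)
    (πk1 : S → A → ℝ)
    (hπk1 : ∀ s a, πk1 s a = Real.exp (qk (s, a) / τ) / ∑ a', Real.exp (qk (s, a') / τ))
    (lse : S → ℝ) (hlse : ∀ s, lse s = τ * Real.log (∑ a, Real.exp (qk (s, a) / τ))) :
    ∀ s a,
      r (s, a) + α * τ * Real.log (πk1 s a)
        + γ * ∑ s', P (s, a) s' *
            (∑ a', πk1 s' a' * (qk (s', a') - τ * Real.log (πk1 s' a')))
      = r (s, a) + γ * (∑ s', P (s, a) s' * lse s') + α * (qk (s, a) - lse s) := by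
  have hZpos : ∀ s : S, 0 < ∑ a, Real.exp (qk (s, a) / τ) := fun s =>
    Finset.sum_pos (fun a _ => Real.exp_pos _) Finset.univ_nonempty
  have hkey : ∀ s a, τ * Real.log (πk1 s a) = qk (s, a) - lse s := by
    intro s a
    rw [hπk1, hlse, Real.log_div (Real.exp_ne_zero _) (hZpos s).ne', Real.log_exp]
    field_simp
  have hsum1 : ∀ s : S, ∑ a, πk1 s a = 1 := by
    intro s
    simp only [hπk1]
    rw [← Finset.sum_div, div_self (hZpos s).ne']
  have hinner : ∀ s : S,
      (∑ a', πk1 s a' * (qk (s, a') - τ * Real.log (πk1 s a'))) = lse s := by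
    intro s
    have : ∀ a' : A, πk1 s a' * (qk (s, a') - τ * Real.log (πk1 s a'))
        = πk1 s a' * lse s := by
      intro a'; rw [hkey]; ring
    rw [Finset.sum_congr rfl (fun a' _ => this a'), ← Finset.sum_mul, hsum1, one_mul]
  intro s a
  rw [Finset.sum_congr rfl (fun s' _ => by rw [hinner s'])]
  rw [← hkey s a]; ring
end

section
/- Let S and A be nonempty finite sets, r : S×A → ℝ, γ ∈ (0,1), P a transition kernel, τ > 0 and α ∈ [0,1). Let (π_k, q_k)_{k≥0} be the error-free M-VI(α,τ) sequence (all ε_k = 0) started from a full-support policy π₀ and any q₀ : S×A → ℝ. Set τ' = (1−α)τ and let q_*^{τ'} be the unique fixed point of the soft Bellman optimality operator L^{τ'} and π_*^{τ'} = softmax(q_*^{τ'}/τ'). Then for every (s,a) ∈ S×A, as k → ∞: q_k(s,a) − ατ·ln π_k(s)(a) → q_*^{τ'}(s,a) and π_k(s)(a) → π_*^{τ'}(s)(a). -/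
open Finset Filter
section MVIHelpers
open Real

/-- If partial sums of `u` are bounded above and `u k ≥ -β k` with `β` summable, `β → 0`,
then `u → 0`. -/
lemma mvi_aux_tendsto_zero_of_partial_sums {u β : ℕ → ℝ} {C : ℝ}
    (hub : ∀ K, ∑ k ∈ Finset.range K, u k ≤ C)
    (hlb : ∀ k, -β k ≤ u k) (hβ0 : ∀ k, 0 ≤ β k) (hβsum : Summable β)
    (hβlim : Tendsto β atTop (nhds 0)) :
    Tendsto u atTop (nhds 0) := by
  have h1 : ∀ k, max (u k) 0 ≤ u k + β k := by
    intro k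
    rcases le_total (u k) 0 with h | h
    · rw [max_eq_right h]; linarith [hlb k]
    · rw [max_eq_left h]; linarith [hβ0 k]
  have key : ∀ K, ∑ k ∈ Finset.range K, max (u k) 0 ≤ C + ∑' k, β k := by
    intro K
    calc ∑ k ∈ Finset.range K, max (u k) 0 ≤ ∑ k ∈ Finset.range K, (u k + β k) :=
          Finset.sum_le_sum fun k _ => h1 k
      _ = (∑ k ∈ Finset.range K, u k) + ∑ k ∈ Finset.range K, β k :=
          Finset.sum_add_distrib
      _ ≤ C + ∑' k, β k := add_le_add (hub K) (Summable.sum_le_tsum _ (fun k _ => hβ0 k) hβsum)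
  have hs : Summable fun k => max (u k) 0 :=
    summable_of_sum_range_le (fun k => le_max_right _ _) key
  have h2 : Tendsto (fun k => max (u k) 0 + β k) atTop (nhds 0) := by
    simpa using hs.tendsto_atTop_zero.add hβlim
  refine squeeze_zero_norm (fun k => ?_) h2
  rw [Real.norm_eq_abs, abs_le]
  constructor
  · have := hlb k; have := le_max_right (u k) 0; have := hβ0 k; linarith
  · have := le_max_left (u k) 0; have := hβ0 k; linarith

/-- If `y (k+1) = α * y k + ε k` with `0 ≤ α < 1` and `ε → 0`, then `y → 0`. -/
lemma mvi_aux_tendsto_zero_of_contract {α : ℝ} (hα0 : 0 ≤ α) (hα1 : α < 1) {y ε : ℕ → ℝ}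
    (hrec : ∀ k, y (k + 1) = α * y k + ε k) (hε : Tendsto ε atTop (nhds 0)) :
    Tendsto y atTop (nhds 0) := by
  rw [Metric.tendsto_atTop]
  intro e he
  have he4 : 0 < e / 4 * (1 - α) := by nlinarith
  obtain ⟨N, hN⟩ := (Metric.tendsto_atTop.mp hε) (e / 4 * (1 - α)) he4
  -- for m : |y (N + m)| ≤ α ^ m * |y N| + e/4
  have hind : ∀ m, |y (N + m)| ≤ α ^ m * |y N| + e / 4 := by
    intro m
    induction m with
    | zero => simp; linarith
    | succ m ih =>
      have hrec' := hrec (N + m)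
      have hNm : |ε (N + m)| ≤ e / 4 * (1 - α) := by
        have := hN (N + m) (Nat.le_add_right _ _)
        rw [Real.dist_eq, sub_zero] at this
        linarith
      have : |y (N + m + 1)| ≤ α * |y (N + m)| + e / 4 * (1 - α) := by
        rw [hrec']
        calc |α * y (N + m) + ε (N + m)| ≤ |α * y (N + m)| + |ε (N + m)| := abs_add_le _ _
          _ = α * |y (N + m)| + |ε (N + m)| := by rw [abs_mul, abs_of_nonneg hα0]
          _ ≤ α * |y (N + m)| + e / 4 * (1 - α) := by linarith
      have h2 : α * (α ^ m * |y N| + e / 4) + e / 4 * (1 - α) = α ^ (m + 1) * |y N| + e / 4 := by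
        ring
      have h3 : α * |y (N + m)| ≤ α * (α ^ m * |y N| + e / 4) :=
        mul_le_mul_of_nonneg_left ih hα0
      have h4 : N + (m + 1) = N + m + 1 := by ring
      rw [h4]
      linarith
  -- choose M with α ^ M * |y N| < e/4
  have hpow : Tendsto (fun m : ℕ => α ^ m * |y N|) atTop (nhds 0) := by
    simpa using (tendsto_pow_atTop_nhds_zero_of_lt_one hα0 hα1).mul_const |y N|
  obtain ⟨M, hM⟩ := (Metric.tendsto_atTop.mp hpow) (e / 4) (by positivity)
  refine ⟨N + M, fun k hk => ?_⟩
  have hkN : N ≤ k := le_trans (Nat.le_add_right _ _) hk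
  obtain ⟨m, rfl⟩ := Nat.exists_eq_add_of_le hkN
  have hMm : M ≤ m := by omega
  have h5 := hM m hMm
  rw [Real.dist_eq, sub_zero] at h5 ⊢
  rw [abs_of_nonneg (by positivity : (0:ℝ) ≤ α ^ m * |y N|)] at h5
  have := hind m
  calc |y (N + m)| ≤ α ^ m * |y N| + e / 4 := this
    _ < e / 4 + e / 4 := by linarith
    _ < e := by linarith

/-- KL divergence nonnegativity (finite, positive weights). -/
lemma mvi_aux_kl_nonneg {A : Type*} [Fintype A] (p q : A → ℝ) (hp : ∀ a, 0 < p a)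
    (hq : ∀ a, 0 < q a) (hps : ∑ a, p a = 1) (hqs : ∑ a, q a = 1) :
    0 ≤ ∑ a, p a * (Real.log (p a) - Real.log (q a)) := by
  have key : ∀ a, p a - q a ≤ p a * (Real.log (p a) - Real.log (q a)) := by
    intro a
    have hlog : Real.log (q a / p a) ≤ q a / p a - 1 :=
      Real.log_le_sub_one_of_pos (div_pos (hq a) (hp a))
    rw [Real.log_div (ne_of_gt (hq a)) (ne_of_gt (hp a))] at hlog
    have h2 : p a * (Real.log (q a) - Real.log (p a)) ≤ p a * (q a / p a - 1) :=
      mul_le_mul_of_nonneg_left hlog (le_of_lt (hp a))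
    have h3 : p a * (q a / p a - 1) = q a - p a := by
      rw [mul_sub, mul_div_cancel₀ _ (ne_of_gt (hp a)), mul_one]
    nlinarith
  calc (0 : ℝ) = ∑ a, (p a - q a) := by rw [Finset.sum_sub_distrib, hps, hqs]; ring
    _ ≤ _ := Finset.sum_le_sum fun a _ => key a

lemma mvi_aux_holder {A : Type*} [Fintype A] [Nonempty A] {τ α : ℝ} (hτ : 0 < τ)
    (hα0 : 0 ≤ α) (hα1 : α < 1) (p : A → ℝ) (hp : ∀ a, 0 < p a) (hps : ∑ a, p a = 1)
    (f : A → ℝ) :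
    τ * Real.log (∑ a, Real.exp ((f a + α * τ * Real.log (p a)) / τ)) ≤
      ((1 - α) * τ) * Real.log (∑ a, Real.exp (f a / ((1 - α) * τ))) := by
  have h1α : (0 : ℝ) < 1 - α := by linarith
  set τ' : ℝ := (1 - α) * τ with hτ'def
  have hτ'pos : 0 < τ' := mul_pos h1α hτ
  set z : A → ℝ := fun a => Real.exp (f a / τ + (α - 1) * Real.log (p a)) with hz
  have h1 : ∀ a, Real.exp ((f a + α * τ * Real.log (p a)) / τ) = p a * z a := by
    intro a
    rw [hz]
    rw [show p a = Real.exp (Real.log (p a)) from (Real.exp_log (hp a)).symm]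
    rw [← Real.exp_add, Real.log_exp]
    congr 1
    field_simp
    ring
  have h2 : ∀ a, p a * z a ^ (1 / (1 - α)) = Real.exp (f a / τ') := by
    intro a
    rw [hz]
    rw [← Real.exp_mul]
    rw [show p a = Real.exp (Real.log (p a)) from (Real.exp_log (hp a)).symm]
    rw [← Real.exp_add, Real.log_exp]
    congr 1
    field_simp
    ring
  have hP : (1 : ℝ) ≤ 1 / (1 - α) := by
    rw [le_div_iff₀ h1α]; linarith
  have hsum := Real.inner_le_weight_mul_Lp_of_nonneg Finset.univ hP p z
    (fun a => (hp a).le) (fun a => (Real.exp_pos _).le)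
  rw [hps] at hsum
  have hinv : (1 / (1 - α))⁻¹ = 1 - α := by
    rw [one_div, inv_inv]
  rw [hinv, Real.one_rpow, one_mul] at hsum
  have hsum2 : (∑ a, p a * z a ^ (1 / (1 - α))) = ∑ a, Real.exp (f a / τ') := by
    exact Finset.sum_congr rfl fun a _ => h2 a
  rw [hsum2] at hsum
  have hpos1 : 0 < ∑ a, p a * z a :=
    Finset.sum_pos (fun a _ => mul_pos (hp a) (Real.exp_pos _)) Finset.univ_nonempty
  have hpos2 : 0 < ∑ a, Real.exp (f a / τ') :=
    Finset.sum_pos (fun a _ => Real.exp_pos _) Finset.univ_nonempty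
  calc τ * Real.log (∑ a, Real.exp ((f a + α * τ * Real.log (p a)) / τ))
      = τ * Real.log (∑ a, p a * z a) := by
        congr 1; exact congrArg _ (Finset.sum_congr rfl fun a _ => h1 a)
    _ ≤ τ * Real.log ((∑ a, Real.exp (f a / τ')) ^ (1 - α)) := by
        apply mul_le_mul_of_nonneg_left _ hτ.le
        exact Real.log_le_log hpos1 hsum
    _ = τ' * Real.log (∑ a, Real.exp (f a / τ')) := by
        rw [Real.log_rpow hpos2, hτ'def]; ring

end MVIHelpers



/-- Convergence of error-free M-VI(α,τ) for `α ∈ [0,1)`: with `τ' = (1−α)τ`, `q_*^{τ'}`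
the (unique) fixed point of the soft Bellman optimality operator `L^{τ'}`, and
`π_*^{τ'} = softmax(q_*^{τ'}/τ')`, for every `(s,a)`:
`q_k(s,a) − ατ ln π_k(s)(a) → q_*^{τ'}(s,a)` and `π_k(s)(a) → π_*^{τ'}(s)(a)` as `k → ∞`. -/
theorem stmt_11 {S A : Type*} [Fintype S] [Fintype A] [Nonempty S] [Nonempty A]
    (r : S × A → ℝ) (γ : ℝ) (hγ : γ ∈ Set.Ioo (0 : ℝ) 1)
    (P : S × A → S → ℝ) (hP0 : ∀ sa s', 0 ≤ P sa s') (hP1 : ∀ sa, ∑ s', P sa s' = 1)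
    (τ : ℝ) (hτ : 0 < τ) (α : ℝ) (hα : α ∈ Set.Ico (0 : ℝ) 1)
    (π : ℕ → S → A → ℝ) (q : ℕ → S × A → ℝ)
    (hπ00 : ∀ s a, 0 < π 0 s a) (hπ01 : ∀ s, ∑ a, π 0 s a = 1)
    (hπ : ∀ k s a, π (k + 1) s a
      = Real.exp (q k (s, a) / τ) / ∑ a', Real.exp (q k (s, a') / τ))
    (hq : ∀ k s a, q (k + 1) (s, a)
      = r (s, a) + α * τ * Real.log (π (k + 1) s a)
        + γ * ∑ s', P (s, a) s' *
            (∑ a', π (k + 1) s' a' * (q k (s', a') - τ * Real.log (π (k + 1) s' a'))))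
    (τ' : ℝ) (hτ' : τ' = (1 - α) * τ)
    (qstar : S × A → ℝ)
    (hqstar : ∀ s a, qstar (s, a)
      = r (s, a) + γ * ∑ s', P (s, a) s' *
          (τ' * Real.log (∑ a', Real.exp (qstar (s', a') / τ'))))
    (πstar : S → A → ℝ)
    (hπstar : ∀ s a, πstar s a
      = Real.exp (qstar (s, a) / τ') / ∑ a', Real.exp (qstar (s, a') / τ')) :
    ∀ s a,
      Filter.Tendsto (fun k => q k (s, a) - α * τ * Real.log (π k s a))
        Filter.atTop (nhds (qstar (s, a))) ∧
      Filter.Tendsto (fun k => π k s a) Filter.atTop (nhds (πstar s a)) := by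
  obtain ⟨hγ0, hγ1⟩ := hγ
  obtain ⟨hα0, hα1⟩ := hα
  have h1α : (0 : ℝ) < 1 - α := by linarith
  have hτ'pos : 0 < τ' := by rw [hτ']; exact mul_pos h1α hτ
  have hτne : τ ≠ 0 := ne_of_gt hτ
  have hτ'ne : τ' ≠ 0 := ne_of_gt hτ'pos
  have hexpsum : ∀ f : A → ℝ, 0 < ∑ a, Real.exp (f a) := fun f =>
    Finset.sum_pos (fun a _ => Real.exp_pos _) Finset.univ_nonempty
  -- positivity and normalization of policies
  have hπpos : ∀ k s a, 0 < π k s a := by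
    intro k
    cases k with
    | zero => exact hπ00
    | succ k =>
      intro s a
      rw [hπ]
      exact div_pos (Real.exp_pos _) (hexpsum _)
  have hπsum : ∀ k s, ∑ a, π k s a = 1 := by
    intro k
    cases k with
    | zero => exact hπ01
    | succ k =>
      intro s
      simp only [hπ]
      rw [← Finset.sum_div, div_self (ne_of_gt (hexpsum _))]
  have hπstarpos : ∀ s a, 0 < πstar s a := by
    intro s a; rw [hπstar]; exact div_pos (Real.exp_pos _) (hexpsum _)
  have hπstarsum : ∀ s, ∑ a, πstar s a = 1 := by
    intro s
    simp only [hπstar]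
    rw [← Finset.sum_div, div_self (ne_of_gt (hexpsum _))]
  -- definitions
  set v : ℕ → S → ℝ := fun k s => τ * Real.log (∑ a, Real.exp (q k (s, a) / τ)) with hv
  set vs : S → ℝ := fun s => τ' * Real.log (∑ a, Real.exp (qstar (s, a) / τ')) with hvs
  set hsq : ℕ → S → A → ℝ := fun k s a => q k (s, a) - α * τ * Real.log (π k s a) with hhsq
  set w : ℕ → S → ℝ := fun k s => vs s - v k s with hw
  set KL : ℕ → S → ℝ :=
    fun k s => ∑ a, πstar s a * (Real.log (πstar s a) - Real.log (π k s a)) with hKL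
  set g : ℕ → S → ℝ := fun k s => ∑ a, πstar s a * (qstar (s, a) - hsq k s a) with hg
  -- soft value relations
  have hlogπ : ∀ k s a, τ * Real.log (π (k + 1) s a) = q k (s, a) - v k s := by
    intro k s a
    rw [hπ k s a, Real.log_div (Real.exp_ne_zero _) (ne_of_gt (hexpsum _)), Real.log_exp]
    simp only [hv]
    field_simp
  have hstarlog : ∀ s a, τ' * Real.log (πstar s a) = qstar (s, a) - vs s := by
    intro s a
    rw [hπstar s a, Real.log_div (Real.exp_ne_zero _) (ne_of_gt (hexpsum _)), Real.log_exp]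
    simp only [hvs]
    field_simp
  -- recursion for hsq
  have hvrec : ∀ k s a, hsq (k + 1) s a = r (s, a) + γ * ∑ s', P (s, a) s' * v k s' := by
    intro k s a
    have hin : ∀ s', (∑ a', π (k + 1) s' a' * (q k (s', a') - τ * Real.log (π (k + 1) s' a')))
        = v k s' := by
      intro s'
      have hc : ∀ a', q k (s', a') - τ * Real.log (π (k + 1) s' a') = v k s' := by
        intro a'; have := hlogπ k s' a'; linarith
      calc (∑ a', π (k + 1) s' a' * (q k (s', a') - τ * Real.log (π (k + 1) s' a')))
          = ∑ a', π (k + 1) s' a' * v k s' :=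
            Finset.sum_congr rfl fun a' _ => by rw [hc a']
        _ = (∑ a', π (k + 1) s' a') * v k s' := by rw [Finset.sum_mul]
        _ = v k s' := by rw [hπsum (k + 1) s', one_mul]
    simp only [hhsq]
    rw [hq k s a]
    have hs2 : (∑ s', P (s, a) s' *
        (∑ a', π (k + 1) s' a' * (q k (s', a') - τ * Real.log (π (k + 1) s' a'))))
        = ∑ s', P (s, a) s' * v k s' :=
      Finset.sum_congr rfl fun s' _ => by rw [hin s']
    rw [hs2]
    ring
  have hqstarrec : ∀ s a, qstar (s, a) = r (s, a) + γ * ∑ s', P (s, a) s' * vs s' := by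
    intro s a
    rw [hqstar s a]
  -- error recursion
  have hwrec : ∀ k s a, qstar (s, a) - hsq (k + 1) s a = γ * ∑ s', P (s, a) s' * w k s' := by
    intro k s a
    rw [hqstarrec s a, hvrec k s a]
    have hss : (∑ s', P (s, a) s' * w k s')
        = (∑ s', P (s, a) s' * vs s') - ∑ s', P (s, a) s' * v k s' := by
      rw [← Finset.sum_sub_distrib]
      exact Finset.sum_congr rfl fun s' _ => by simp only [hw]; ring
    rw [hss]
    ring
  -- KL nonneg
  have hKL0 : ∀ k s, 0 ≤ KL k s := by
    intro k s
    simp only [hKL]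
    exact mvi_aux_kl_nonneg _ _ (hπstarpos s) (fun a => hπpos k s a) (hπstarsum s) (hπsum k s)
  -- identity: v in terms of πstar
  have hvid : ∀ k s, v k s
      = (∑ a, πstar s a * (q k (s, a) - τ * Real.log (πstar s a))) + τ * KL (k + 1) s := by
    intro k s
    have key : ∀ a, πstar s a * (q k (s, a) - τ * Real.log (πstar s a))
        + τ * (πstar s a * (Real.log (πstar s a) - Real.log (π (k + 1) s a)))
        = πstar s a * v k s := by
      intro a
      have h1 := hlogπ k s a
      linear_combination (-(πstar s a)) * h1
    simp only [hKL]
    rw [Finset.mul_sum, ← Finset.sum_add_distrib]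
    calc v k s = (∑ a, πstar s a) * v k s := by rw [hπstarsum, one_mul]
      _ = ∑ a, πstar s a * v k s := by rw [Finset.sum_mul]
      _ = _ := (Finset.sum_congr rfl fun a _ => (key a).symm)
  have hvsid : ∀ s, vs s = ∑ a, πstar s a * (qstar (s, a) - τ' * Real.log (πstar s a)) := by
    intro s
    have hc : ∀ a, qstar (s, a) - τ' * Real.log (πstar s a) = vs s := by
      intro a; have := hstarlog s a; linarith
    calc vs s = (∑ a, πstar s a) * vs s := by rw [hπstarsum, one_mul]
      _ = ∑ a, πstar s a * vs s := by rw [Finset.sum_mul]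
      _ = _ := Finset.sum_congr rfl fun a _ => by rw [hc a]
  -- the exact identity w = g + ατ KL − τ KL'
  have hwid : ∀ k s, w k s = g k s + α * τ * KL k s - τ * KL (k + 1) s := by
    intro k s
    have key : ∀ a, πstar s a * (qstar (s, a) - τ' * Real.log (πstar s a))
        - πstar s a * (q k (s, a) - τ * Real.log (πstar s a))
        = πstar s a * (qstar (s, a) - hsq k s a)
          + α * τ * (πstar s a * (Real.log (πstar s a) - Real.log (π k s a))) := by
      intro a
      simp only [hhsq]
      rw [hτ']
      ring
    have hmain : (∑ a, πstar s a * (qstar (s, a) - τ' * Real.log (πstar s a)))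
        - (∑ a, πstar s a * (q k (s, a) - τ * Real.log (πstar s a)))
        = g k s + α * τ * KL k s := by
      simp only [hg, hKL]
      rw [Finset.mul_sum, ← Finset.sum_add_distrib, ← Finset.sum_sub_distrib]
      exact Finset.sum_congr rfl fun a _ => key a
    have h1 := hvid k s
    have h2 := hvsid s
    simp only [hw]
    linarith
  -- Hölder upper bound
  have hup : ∀ k s, v k s ≤ τ' * Real.log (∑ a, Real.exp (hsq k s a / τ')) := by
    intro k s
    have hrw : v k s = τ * Real.log (∑ a, Real.exp ((hsq k s a + α * τ * Real.log (π k s a)) / τ)) := by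
      simp only [hv]
      congr 2
      exact Finset.sum_congr rfl fun a _ => by simp only [hhsq]; ring_nf
    rw [hrw, hτ']
    exact mvi_aux_holder hτ hα0 hα1 (π k s) (hπpos k s) (hπsum k s) (hsq k s)
  -- sup of error, one-sided contraction
  set psup : ℕ → ℝ :=
    fun k => Finset.univ.sup' Finset.univ_nonempty (fun sa : S × A => hsq k sa.1 sa.2 - qstar sa)
    with hpsup
  have hle_psup : ∀ k s a, hsq k s a - qstar (s, a) ≤ psup k := by
    intro k s a
    simp only [hpsup]
    exact Finset.le_sup' (fun sa : S × A => hsq k sa.1 sa.2 - qstar sa) (Finset.mem_univ (s, a))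
  have hvub : ∀ k s, v k s - vs s ≤ psup k := by
    intro k s
    have h1 := hup k s
    have h2 : (∑ a, Real.exp (hsq k s a / τ'))
        ≤ Real.exp (psup k / τ') * ∑ a, Real.exp (qstar (s, a) / τ') := by
      rw [Finset.mul_sum]
      refine Finset.sum_le_sum fun a _ => ?_
      rw [← Real.exp_add]
      apply Real.exp_le_exp.mpr
      have h3 := hle_psup k s a
      rw [← add_div]
      gcongr
      linarith
    have h4 : τ' * Real.log (∑ a, Real.exp (hsq k s a / τ')) ≤ psup k + vs s := by
      calc τ' * Real.log (∑ a, Real.exp (hsq k s a / τ'))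
          ≤ τ' * Real.log (Real.exp (psup k / τ') * ∑ a, Real.exp (qstar (s, a) / τ')) := by
            apply mul_le_mul_of_nonneg_left _ hτ'pos.le
            exact Real.log_le_log (hexpsum _) h2
        _ = psup k + vs s := by
            rw [Real.log_mul (Real.exp_ne_zero _) (ne_of_gt (hexpsum _)), Real.log_exp]
            simp only [hvs]
            field_simp
    linarith
  have hpsuprec : ∀ k, psup (k + 1) ≤ γ * psup k := by
    intro k
    apply Finset.sup'_le
    rintro ⟨s, a⟩ _
    dsimp only
    have h1 := hwrec k s a
    have h2 : -psup k ≤ ∑ s', P (s, a) s' * w k s' := by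
      have h3 : (∑ s', P (s, a) s' * (-psup k)) ≤ ∑ s', P (s, a) s' * w k s' := by
        refine Finset.sum_le_sum fun s' _ => ?_
        apply mul_le_mul_of_nonneg_left _ (hP0 _ _)
        have := hvub k s'
        simp only [hw]
        linarith
      calc -psup k = (∑ s', P (s, a) s') * (-psup k) := by rw [hP1]; ring
        _ = ∑ s', P (s, a) s' * (-psup k) := by rw [Finset.sum_mul]
        _ ≤ _ := h3
    nlinarith
  -- geometric envelope
  set B0 : ℝ := max (psup 0) 0 with hB0
  have hB0nn : 0 ≤ B0 := le_max_right _ _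
  set β : ℕ → ℝ := fun k => B0 * γ ^ k with hβ
  have hβnn : ∀ k, 0 ≤ β k := fun k => mul_nonneg hB0nn (pow_nonneg hγ0.le _)
  have hβpsup : ∀ k, psup k ≤ β k := by
    intro k
    induction k with
    | zero => simp only [hβ, pow_zero, mul_one, hB0]; exact le_max_left _ _
    | succ k ih =>
      calc psup (k + 1) ≤ γ * psup k := hpsuprec k
        _ ≤ γ * β k := by nlinarith
        _ = β (k + 1) := by simp only [hβ]; ring
  have hβle : ∀ k, β k ≤ B0 := by
    intro k
    simp only [hβ]
    calc B0 * γ ^ k ≤ B0 * 1 := by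
          apply mul_le_mul_of_nonneg_left _ hB0nn
          exact pow_le_one₀ hγ0.le hγ1.le
      _ = B0 := mul_one _
  have hwlb : ∀ k s, -(β k) ≤ w k s := by
    intro k s
    have h1 := hvub k s
    have h2 := hβpsup k
    simp only [hw]
    linarith
  -- g recursion
  have hgrec : ∀ k s, g (k + 1) s
      = γ * ∑ a, πstar s a * (∑ s', P (s, a) s' * w k s') := by
    intro k s
    simp only [hg]
    rw [Finset.mul_sum]
    refine Finset.sum_congr rfl fun a _ => ?_
    rw [hwrec k s a]
    ring
  -- KL telescoping
  have hT : ∀ K s, (∑ k ∈ Finset.range K, (α * τ * KL k s - τ * KL (k + 1) s))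
      ≤ τ * KL 0 s - τ * KL K s := by
    intro K s
    induction K with
    | zero => simp
    | succ K ih =>
      rw [Finset.sum_range_succ]
      have h1 := hKL0 K s
      have h2 : 0 ≤ (1 - α) * (τ * KL K s) := mul_nonneg (by linarith) (mul_nonneg hτ.le h1)
      nlinarith
  -- g partial sums
  have hgsum : ∀ K s, (∑ k ∈ Finset.range (K + 1), g k s)
      = g 0 s + γ * ∑ a, πstar s a * ∑ s', P (s, a) s' * (∑ k ∈ Finset.range K, w k s') := by
    intro K s
    rw [Finset.sum_range_succ']
    have h1 : (∑ k ∈ Finset.range K, g (k + 1) s)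
        = γ * ∑ a, πstar s a * ∑ s', P (s, a) s' * (∑ k ∈ Finset.range K, w k s') := by
      rw [Finset.sum_congr rfl fun k _ => hgrec k s, ← Finset.mul_sum]
      congr 1
      rw [Finset.sum_comm]
      refine Finset.sum_congr rfl fun a _ => ?_
      rw [← Finset.mul_sum]
      congr 1
      rw [Finset.sum_comm]
      refine Finset.sum_congr rfl fun s' _ => ?_
      rw [← Finset.mul_sum]
    rw [h1]
    ring
  -- uniform bound on partial sums of w
  set c0 : ℝ := Finset.univ.sup' Finset.univ_nonempty (fun s : S => g 0 s + τ * KL 0 s) with hc0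
  set C : ℝ := max 0 ((c0 + γ * B0) / (1 - γ)) with hC
  have hSle : ∀ K s, (∑ k ∈ Finset.range K, w k s) ≤ C := by
    intro K s
    cases K with
    | zero => simp only [Finset.range_zero, Finset.sum_empty]; exact le_max_left _ _
    | succ K =>
      set σ : ℝ := Finset.univ.sup' Finset.univ_nonempty
        (fun s : S => ∑ k ∈ Finset.range (K + 1), w k s) with hσ
      have hstep : ∀ s0 : S, (∑ k ∈ Finset.range (K + 1), w k s0) ≤ c0 + γ * σ + γ * B0 := by
        intro s0
        have hsplit : (∑ k ∈ Finset.range (K + 1), w k s0)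
            = (∑ k ∈ Finset.range (K + 1), g k s0)
              + ∑ k ∈ Finset.range (K + 1), (α * τ * KL k s0 - τ * KL (k + 1) s0) := by
          rw [← Finset.sum_add_distrib]
          exact Finset.sum_congr rfl fun k _ => by rw [hwid k s0]; ring
        have hinner : ∀ a : A, (∑ s', P (s0, a) s' * (∑ k ∈ Finset.range K, w k s'))
            ≤ σ + β K := by
          intro a
          have h5 : ∀ s', (∑ k ∈ Finset.range K, w k s') ≤ σ + β K := by
            intro s'
            have h6 : (∑ k ∈ Finset.range (K + 1), w k s') ≤ σ :=
              Finset.le_sup' (fun s : S => ∑ k ∈ Finset.range (K + 1), w k s)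
                (Finset.mem_univ s')
            have h7 : (∑ k ∈ Finset.range (K + 1), w k s')
                = (∑ k ∈ Finset.range K, w k s') + w K s' := Finset.sum_range_succ _ _
            have h8 := hwlb K s'
            linarith
          calc (∑ s', P (s0, a) s' * (∑ k ∈ Finset.range K, w k s'))
              ≤ ∑ s', P (s0, a) s' * (σ + β K) :=
                Finset.sum_le_sum fun s' _ => mul_le_mul_of_nonneg_left (h5 s') (hP0 _ _)
            _ = (∑ s', P (s0, a) s') * (σ + β K) := by rw [Finset.sum_mul]
            _ = σ + β K := by rw [hP1, one_mul]
        have houter : (∑ a, πstar s0 a * ∑ s', P (s0, a) s' * (∑ k ∈ Finset.range K, w k s'))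
            ≤ σ + β K := by
          calc (∑ a, πstar s0 a * ∑ s', P (s0, a) s' * (∑ k ∈ Finset.range K, w k s'))
              ≤ ∑ a, πstar s0 a * (σ + β K) :=
                Finset.sum_le_sum fun a _ =>
                  mul_le_mul_of_nonneg_left (hinner a) (hπstarpos s0 a).le
            _ = (∑ a, πstar s0 a) * (σ + β K) := by rw [Finset.sum_mul]
            _ = σ + β K := by rw [hπstarsum, one_mul]
        have hc0le : g 0 s0 + τ * KL 0 s0 ≤ c0 :=
          Finset.le_sup' (fun s : S => g 0 s + τ * KL 0 s) (Finset.mem_univ s0)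
        have hTle := hT (K + 1) s0
        have hKL2 := hKL0 (K + 1) s0
        have hβK := hβle K
        rw [hsplit, hgsum K s0]
        nlinarith [mul_le_mul_of_nonneg_left houter hγ0.le]
      have hσle : σ ≤ c0 + γ * σ + γ * B0 := Finset.sup'_le _ _ fun s0 _ => hstep s0
      have hσb : σ ≤ (c0 + γ * B0) / (1 - γ) := by
        rw [le_div_iff₀ (by linarith : (0:ℝ) < 1 - γ)]
        nlinarith
      have h9 : (∑ k ∈ Finset.range (K + 1), w k s) ≤ σ :=
        Finset.le_sup' (fun s : S => ∑ k ∈ Finset.range (K + 1), w k s) (Finset.mem_univ s)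
      calc (∑ k ∈ Finset.range (K + 1), w k s) ≤ σ := h9
        _ ≤ (c0 + γ * B0) / (1 - γ) := hσb
        _ ≤ C := le_max_right _ _
  -- w tends to zero
  have hwlim : ∀ s, Tendsto (fun k => w k s) atTop (nhds 0) := by
    intro s
    refine mvi_aux_tendsto_zero_of_partial_sums (fun K => hSle K s) (fun k => hwlb k s)
      hβnn ?_ ?_
    · exact (summable_geometric_of_lt_one hγ0.le hγ1).mul_left B0
    · have := (tendsto_pow_atTop_nhds_zero_of_lt_one hγ0.le hγ1).const_mul B0
      simpa using this
  -- hsq tends to qstar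
  have hElim : ∀ s a, Tendsto (fun k => hsq k s a - qstar (s, a)) atTop (nhds 0) := by
    intro s a
    apply (Filter.tendsto_add_atTop_iff_nat 1).mp
    have heq : ∀ k, hsq (k + 1) s a - qstar (s, a)
        = -(γ * ∑ s', P (s, a) s' * w k s') := by
      intro k; have := hwrec k s a; linarith
    simp only [heq]
    have h2 : Tendsto (fun k => ∑ s', P (s, a) s' * w k s') atTop (nhds 0) := by
      have h3 := tendsto_finset_sum Finset.univ
        (fun s' (_ : s' ∈ Finset.univ) => (hwlim s').const_mul (P (s, a) s'))
      simpa using h3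
    have h4 := (h2.const_mul γ).neg
    simpa using h4
  -- conclusion
  intro s a
  constructor
  · have h1 := (hElim s a).add_const (qstar (s, a))
    simp only [sub_add_cancel, zero_add] at h1
    simpa only [hhsq] using h1
  · set x : ℕ → ℝ := fun k => τ * Real.log (π k s a) - τ * Real.log (πstar s a) with hx
    have hxrec : ∀ k, x (k + 1) = α * x k + ((hsq k s a - qstar (s, a)) + w k s) := by
      intro k
      have h1 := hlogπ k s a
      have h2 := hstarlog s a
      rw [hτ'] at h2
      simp only [hx, hw, hhsq]
      linear_combination h1 - h2
    have hεlim : Tendsto (fun k => (hsq k s a - qstar (s, a)) + w k s) atTop (nhds 0) := by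
      have := (hElim s a).add (hwlim s)
      simpa using this
    have hxlim : Tendsto x atTop (nhds 0) :=
      mvi_aux_tendsto_zero_of_contract hα0 hα1 hxrec hεlim
    have hπeq : ∀ k, π k s a = Real.exp (x k / τ + Real.log (πstar s a)) := by
      intro k
      simp only [hx]
      rw [show (τ * Real.log (π k s a) - τ * Real.log (πstar s a)) / τ
          + Real.log (πstar s a) = Real.log (π k s a) by field_simp; ring]
      rw [Real.exp_log (hπpos k s a)]
    have h5 : Tendsto (fun k => Real.exp (x k / τ + Real.log (πstar s a))) atTop
        (nhds (πstar s a)) := by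
      have h6 : Tendsto (fun k => x k / τ + Real.log (πstar s a)) atTop
          (nhds (0 / τ + Real.log (πstar s a))) := (hxlim.div_const τ).add_const _
      have h7 := (Real.continuous_exp.tendsto _).comp h6
      simp only [Function.comp_def] at h7
      simpa [Real.exp_log (hπstarpos s a)] using h7
    have h8 : (fun k => π k s a) = fun k => Real.exp (x k / τ + Real.log (πstar s a)) :=
      funext hπeq
    rw [h8]
    exact h5
end

section
/- (Theorem 2, case α = 1.) Let S and A be nonempty finite sets, r : S×A → ℝ, γ ∈ (0,1), P a transition kernel and τ > 0. Let q_* be the unique fixed point of the Bellman optimality operator L, and assume that for every s ∈ S the maximizer a_*(s) of a ↦ q_*(s,a) is unique. Let (π_k, q_k)_{k≥0} be the error-free M-VI(1,τ) sequence (all ε_k = 0) started from a full-support policy π₀ and any q₀. Then for every s ∈ S: q_k(s, a_*(s)) → q_*(s, a_*(s)) as k → ∞, and for every a ≠ a_*(s), q_k(s,a) → −∞ (i.e., tends to the filter atBot) as k → ∞. -/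
set_option maxHeartbeats 1000000

open Filter

lemma lse_ge {A : Type*} [Fintype A] [Nonempty A] {τ : ℝ} (hτ : 0 < τ) (f : A → ℝ) (a : A) :
    f a ≤ τ * Real.log (∑ a', Real.exp (f a' / τ)) := by
  have hZ : Real.exp (f a / τ) ≤ ∑ a', Real.exp (f a' / τ) :=
    Finset.single_le_sum (fun a' (_ : a' ∈ Finset.univ) => (Real.exp_pos (f a' / τ)).le) (Finset.mem_univ a)
  have := Real.log_le_log (Real.exp_pos _) hZ
  rw [Real.log_exp] at this
  calc f a = τ * (f a / τ) := by field_simp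
    _ ≤ τ * Real.log (∑ a', Real.exp (f a' / τ)) := by
        exact mul_le_mul_of_nonneg_left this hτ.le

lemma lse_le {A : Type*} [Fintype A] [Nonempty A] {τ : ℝ} (hτ : 0 < τ) (f : A → ℝ) :
    τ * Real.log (∑ a', Real.exp (f a' / τ))
      ≤ (Finset.univ.sup' Finset.univ_nonempty f) + τ * Real.log (Fintype.card A) := by
  set M := Finset.univ.sup' Finset.univ_nonempty f with hM
  have h1 : ∑ a', Real.exp (f a' / τ) ≤ (Fintype.card A : ℝ) * Real.exp (M / τ) := by
    calc ∑ a', Real.exp (f a' / τ) ≤ ∑ _a' : A, Real.exp (M / τ) := by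
          apply Finset.sum_le_sum
          intro a' _
          have hf : f a' ≤ M := Finset.le_sup' f (Finset.mem_univ a')
          exact Real.exp_le_exp.2 (by gcongr)
      _ = (Fintype.card A : ℝ) * Real.exp (M / τ) := by
          rw [Finset.sum_const, Finset.card_univ, nsmul_eq_mul]
  have hZpos : (0:ℝ) < ∑ a', Real.exp (f a' / τ) :=
    Finset.sum_pos (fun a' _ => Real.exp_pos _) Finset.univ_nonempty
  have h2 := Real.log_le_log hZpos h1
  have hcard : (0:ℝ) < (Fintype.card A : ℝ) := by
    exact_mod_cast Fintype.card_pos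
  rw [Real.log_mul (ne_of_gt hcard) (Real.exp_ne_zero _), Real.log_exp] at h2
  have := mul_le_mul_of_nonneg_left h2 hτ.le
  rw [mul_add] at this
  have hMτ : τ * (M / τ) = M := by field_simp
  linarith [this, hMτ.le]

lemma decay_lemma {γ ρ c : ℝ} (hγ0 : 0 ≤ γ) (hγ1 : γ < 1) (hρ0 : 0 ≤ ρ) (hρ1 : ρ < 1)
    (hc : 0 ≤ c) (x : ℕ → ℝ) (hx0 : ∀ k, 0 ≤ x k)
    (hrec : ∀ k, x (k + 1) ≤ γ * x k + c * ρ ^ k) :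
    Tendsto x atTop (nhds 0) := by
  set σ : ℝ := (max γ ρ + 1) / 2 with hσ
  have hm1 : max γ ρ < 1 := max_lt hγ1 hρ1
  have hm0 : 0 ≤ max γ ρ := le_trans hγ0 (le_max_left _ _)
  have hσ1 : σ < 1 := by rw [hσ]; linarith
  have hσm : max γ ρ < σ := by rw [hσ]; linarith
  have hγσ : γ < σ := lt_of_le_of_lt (le_max_left _ _) hσm
  have hρσ : ρ < σ := lt_of_le_of_lt (le_max_right _ _) hσm
  have hσ0 : 0 ≤ σ := by rw [hσ]; linarith
  set K : ℝ := max (x 0) (c / (σ - γ)) with hK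
  have hKx0 : x 0 ≤ K := le_max_left _ _
  have hKc : c ≤ K * (σ - γ) := by
    have h1 : c / (σ - γ) ≤ K := le_max_right _ _
    have h2 : 0 < σ - γ := by linarith
    calc c = (c / (σ - γ)) * (σ - γ) := by field_simp
      _ ≤ K * (σ - γ) := mul_le_mul_of_nonneg_right h1 h2.le
  have hbound : ∀ k, x k ≤ K * σ ^ k := by
    intro k
    induction k with
    | zero => simpa using hKx0
    | succ k ih =>
      have h1 : x (k + 1) ≤ γ * (K * σ ^ k) + c * σ ^ k := by
        have hρσk : ρ ^ k ≤ σ ^ k := pow_le_pow_left₀ hρ0 hρσ.le k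
        have := hrec k
        nlinarith [mul_le_mul_of_nonneg_left ih hγ0, mul_le_mul_of_nonneg_left hρσk hc]
      have h2 : γ * (K * σ ^ k) + c * σ ^ k ≤ K * σ ^ (k + 1) := by
        have hσk : 0 ≤ σ ^ k := pow_nonneg hσ0 k
        have : γ * K + c ≤ K * σ := by nlinarith
        calc γ * (K * σ ^ k) + c * σ ^ k = (γ * K + c) * σ ^ k := by ring
          _ ≤ (K * σ) * σ ^ k := mul_le_mul_of_nonneg_right this hσk
          _ = K * σ ^ (k + 1) := by ring
      linarith
  have htend : Tendsto (fun k => K * σ ^ k) atTop (nhds 0) := by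
    have := (tendsto_pow_atTop_nhds_zero_of_lt_one hσ0 hσ1).const_mul K
    simpa using this
  exact squeeze_zero hx0 hbound htend

/-- Theorem 2 (case α = 1): along the error-free M-VI(1,τ) iterates, with `q_*` the (unique)
fixed point of the Bellman optimality operator and `a_*(s)` the unique maximizer of
`q_*(s,·)`, one has `q_k(s, a_*(s)) → q_*(s, a_*(s))` and `q_k(s,a) → −∞` for `a ≠ a_*(s)`. -/
theorem stmt_14 {S A : Type*} [Fintype S] [Fintype A] [Nonempty S] [Nonempty A]
    (r : S × A → ℝ) (γ : ℝ) (hγ : γ ∈ Set.Ioo (0 : ℝ) 1)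
    (P : S × A → S → ℝ) (hP0 : ∀ sa s', 0 ≤ P sa s') (hP1 : ∀ sa, ∑ s', P sa s' = 1)
    (τ : ℝ) (hτ : 0 < τ)
    (qstar : S × A → ℝ)
    (hqstar : ∀ s a, qstar (s, a)
      = r (s, a) + γ * ∑ s', P (s, a) s' *
          (Finset.univ.sup' Finset.univ_nonempty fun a' => qstar (s', a')))
    (astar : S → A)
    (hastar : ∀ s a, a ≠ astar s → qstar (s, a) < qstar (s, astar s))
    (π : ℕ → S → A → ℝ) (q : ℕ → S × A → ℝ)
    (hπ00 : ∀ s a, 0 < π 0 s a) (hπ01 : ∀ s, ∑ a, π 0 s a = 1)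
    (hπ : ∀ k s a, π (k + 1) s a
      = Real.exp (q k (s, a) / τ) / ∑ a', Real.exp (q k (s, a') / τ))
    (hq : ∀ k s a, q (k + 1) (s, a)
      = r (s, a) + 1 * τ * Real.log (π (k + 1) s a)
        + γ * ∑ s', P (s, a) s' *
            (∑ a', π (k + 1) s' a' * (q k (s', a') - τ * Real.log (π (k + 1) s' a')))) :
    ∀ s : S,
      Filter.Tendsto (fun k => q k (s, astar s)) Filter.atTop (nhds (qstar (s, astar s))) ∧
      ∀ a : A, a ≠ astar s →
        Filter.Tendsto (fun k => q k (s, a)) Filter.atTop Filter.atBot := by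
  obtain ⟨hγ0, hγ1⟩ := hγ
  classical
  -- soft value function
  set v : ℕ → S → ℝ := fun k s => τ * Real.log (∑ a, Real.exp (q k (s, a) / τ)) with hv
  have hZpos : ∀ k s, (0:ℝ) < ∑ a, Real.exp (q k (s, a) / τ) :=
    fun k s => Finset.sum_pos (fun a _ => Real.exp_pos _) Finset.univ_nonempty
  have hπsum : ∀ k s, ∑ a, π (k + 1) s a = 1 := by
    intro k s
    rw [Finset.sum_congr rfl (fun a _ => hπ k s a), ← Finset.sum_div,
      div_self (ne_of_gt (hZpos k s))]
  have hlogπ : ∀ k s a, τ * Real.log (π (k + 1) s a) = q k (s, a) - v k s := by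
    intro k s a
    rw [hπ k s a, Real.log_div (Real.exp_ne_zero _) (ne_of_gt (hZpos k s)), Real.log_exp, hv,
      mul_sub]
    have : τ * (q k (s, a) / τ) = q k (s, a) := by field_simp
    rw [this]
  -- the fundamental one-step recurrence
  have hrec : ∀ k s a, q (k + 1) (s, a)
      = r (s, a) + γ * (∑ s', P (s, a) s' * v k s') + (q k (s, a) - v k s) := by
    intro k s a
    have hinner : ∀ s', ∑ a', π (k + 1) s' a' * (q k (s', a') - τ * Real.log (π (k + 1) s' a'))
        = v k s' := by
      intro s'
      have hterm : ∀ a', q k (s', a') - τ * Real.log (π (k + 1) s' a') = v k s' := by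
        intro a'; have := hlogπ k s' a'; linarith
      calc ∑ a', π (k + 1) s' a' * (q k (s', a') - τ * Real.log (π (k + 1) s' a'))
          = ∑ a', π (k + 1) s' a' * v k s' :=
            Finset.sum_congr rfl (fun a' _ => by rw [hterm a'])
        _ = (∑ a', π (k + 1) s' a') * v k s' := by rw [Finset.sum_mul]
        _ = v k s' := by rw [hπsum k s', one_mul]
    have houter : ∑ s', P (s, a) s' *
        (∑ a', π (k + 1) s' a' * (q k (s', a') - τ * Real.log (π (k + 1) s' a')))
        = ∑ s', P (s, a) s' * v k s' :=
      Finset.sum_congr rfl (fun s' _ => by rw [hinner s'])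
    rw [hq k s a, houter]
    have := hlogπ k s a
    linarith
  -- cumulative values
  set V : ℕ → S → ℝ := fun k s => ∑ j ∈ Finset.range k, v j s with hV
  -- optimal value
  set vstar : S → ℝ := fun s => qstar (s, astar s) with hvstar
  have hsup : ∀ s, ((Finset.univ : Finset A).sup' Finset.univ_nonempty fun a => qstar (s, a)) = vstar s := by
    intro s
    apply le_antisymm
    · apply Finset.sup'_le
      intro a _
      by_cases h : a = astar s
      · subst h; exact le_refl _
      · exact (hastar s a h).le
    · show vstar s ≤ _
      rw [hvstar]
      exact Finset.le_sup' (fun a => qstar (s, a)) (Finset.mem_univ (astar s))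
  have hq_fix : ∀ s a, qstar (s, a) = r (s, a) + γ * ∑ s', P (s, a) s' * vstar s' := by
    intro s a
    rw [hqstar s a]
    congr 2
    exact Finset.sum_congr rfl (fun s' _ => by rw [hsup s'])
  have hqstar_le : ∀ s a, qstar (s, a) ≤ vstar s := by
    intro s a
    by_cases h : a = astar s
    · subst h; exact le_refl _
    · exact (hastar s a h).le
  -- closed form
  have hclosed : ∀ k s a, q k (s, a)
      = q 0 (s, a) + k * r (s, a) + γ * (∑ s', P (s, a) s' * V k s') - V k s := by
    intro k
    induction k with
    | zero =>
      intro s a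
      simp [hV]
    | succ k ih =>
      intro s a
      have hVsucc : ∀ s', V (k + 1) s' = V k s' + v k s' := by
        intro s'; rw [hV]; exact Finset.sum_range_succ _ _
      have hsplit : ∑ s', P (s, a) s' * V (k + 1) s'
          = (∑ s', P (s, a) s' * V k s') + ∑ s', P (s, a) s' * v k s' := by
        rw [← Finset.sum_add_distrib]
        exact Finset.sum_congr rfl (fun s' _ => by rw [hVsucc s']; ring)
      rw [hrec k s a, ih s a, hVsucc s, hsplit]
      push_cast
      ring
  -- deviation of cumulative value from linear growth
  set B : ℕ → S → ℝ := fun k s => V k s - k * vstar s with hB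
  set G : ℕ → S → A → ℝ :=
    fun k s a => q 0 (s, a) + k * qstar (s, a) + γ * ∑ s', P (s, a) s' * B k s' with hG
  have hqG : ∀ k s a, q k (s, a) = G k s a - V k s := by
    intro k s a
    have h1 : ∑ s', P (s, a) s' * B k s'
        = (∑ s', P (s, a) s' * V k s') - k * ∑ s', P (s, a) s' * vstar s' := by
      rw [hB, Finset.mul_sum]
      rw [← Finset.sum_sub_distrib]
      exact Finset.sum_congr rfl (fun s' _ => by ring)
    rw [hG, hclosed k s a]
    simp only []
    rw [h1]
    have h2 := hq_fix s a
    nlinarith [h2]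
  clear_value v V vstar B G

  -- constants
  have hA1 : (1:ℝ) ≤ (Fintype.card A : ℝ) := by exact_mod_cast Fintype.card_pos
  set κ : ℝ := τ * Real.log (Fintype.card A) with hκdef
  have hκ0 : 0 ≤ κ := mul_nonneg hτ.le (Real.log_nonneg hA1)
  set C0 : ℝ := Finset.univ.sup' Finset.univ_nonempty (fun sa : S × A => |q 0 sa|) with hC0def
  have hC0 : ∀ s a, |q 0 (s, a)| ≤ C0 := by
    intro s a
    rw [hC0def]
    exact Finset.le_sup' (fun sa : S × A => |q 0 sa|) (Finset.mem_univ (s, a))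
  have hC0nn : 0 ≤ C0 :=
    le_trans (abs_nonneg _) (hC0 (Classical.arbitrary S) (Classical.arbitrary A))
  set Cv : ℝ := Finset.univ.sup' Finset.univ_nonempty (fun s : S => |vstar s|) with hCvdef
  have hCv : ∀ s, |vstar s| ≤ Cv := by
    intro s
    rw [hCvdef]
    exact Finset.le_sup' (fun s : S => |vstar s|) (Finset.mem_univ s)
  have hCvnn : 0 ≤ Cv := le_trans (abs_nonneg _) (hCv (Classical.arbitrary S))
  have h1γ : 0 < 1 - γ := by linarith
  set β : ℝ := (C0 + Cv + κ) / (1 - γ) with hβdef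
  have hβ0 : 0 ≤ β := div_nonneg (by linarith) h1γ.le
  have hβγ : C0 + Cv + κ + γ * β = β := by
    rw [hβdef]; field_simp; ring
  clear_value κ C0 Cv β
  -- averaging bound
  have hPavg : ∀ (sa : S × A) (f : S → ℝ) (b : ℝ), (∀ s', |f s'| ≤ b) →
      |∑ s', P sa s' * f s'| ≤ b := by
    intro sa f b hb
    calc |∑ s', P sa s' * f s'| ≤ ∑ s', |P sa s' * f s'| := Finset.abs_sum_le_sum_abs _ _
      _ ≤ ∑ s', P sa s' * b := by
          apply Finset.sum_le_sum
          intro s' _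
          rw [abs_mul, abs_of_nonneg (hP0 sa s')]
          exact mul_le_mul_of_nonneg_left (hb s') (hP0 sa s')
      _ = b := by rw [← Finset.sum_mul, hP1 sa, one_mul]
  -- soft value in terms of G
  have hvVG : ∀ k s, v k s + V k s = τ * Real.log (∑ a, Real.exp (G k s a / τ)) := by
    intro k s
    have h1 : ∀ a, Real.exp (q k (s, a) / τ)
        = Real.exp (G k s a / τ) * Real.exp (-(V k s) / τ) := by
      intro a
      rw [← Real.exp_add, hqG k s a]
      congr 1
      field_simp
      ring
    have h2 : ∑ a, Real.exp (q k (s, a) / τ)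
        = (∑ a, Real.exp (G k s a / τ)) * Real.exp (-(V k s) / τ) := by
      rw [Finset.sum_mul]
      exact Finset.sum_congr rfl (fun a _ => h1 a)
    have hGpos : (0:ℝ) < ∑ a, Real.exp (G k s a / τ) :=
      Finset.sum_pos (fun a _ => Real.exp_pos _) Finset.univ_nonempty
    simp only [hv]
    rw [h2, Real.log_mul (ne_of_gt hGpos) (Real.exp_ne_zero _), Real.log_exp, mul_add]
    have h3 : τ * (-(V k s) / τ) = -(V k s) := by field_simp
    linarith [h3]
  have hBsucc : ∀ k s, B (k + 1) s
      = τ * Real.log (∑ a, Real.exp (G k s a / τ)) - ((k : ℝ) + 1) * vstar s := by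
    intro k s
    have hVsucc : V (k + 1) s = V k s + v k s := by
      simp only [hV]; exact Finset.sum_range_succ _ _
    simp only [hB]
    rw [hVsucc, ← hvVG k s]
    push_cast
    ring
  -- uniform bound on B
  have hBbound : ∀ k s, |B k s| ≤ β := by
    intro k
    induction k with
    | zero =>
      intro s
      have : B 0 s = 0 := by simp [hB, hV]
      rw [this, abs_zero]; exact hβ0
    | succ k ih =>
      intro s
      have hvsCv := abs_le.1 (hCv s)
      have hup : ∀ a, G k s a ≤ C0 + (k : ℝ) * vstar s + γ * β := by
        intro a
        have h1 : q 0 (s, a) ≤ C0 := (abs_le.1 (hC0 s a)).2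
        have h2 : qstar (s, a) ≤ vstar s := hqstar_le s a
        have h3 := (abs_le.1 (hPavg (s, a) (B k) β (fun s' => ih s'))).2
        have hk : (0:ℝ) ≤ (k:ℝ) := Nat.cast_nonneg k
        have h4 : γ * (∑ s', P (s, a) s' * B k s') ≤ γ * β :=
          mul_le_mul_of_nonneg_left h3 hγ0.le
        have h5 : (k:ℝ) * qstar (s, a) ≤ (k:ℝ) * vstar s :=
          mul_le_mul_of_nonneg_left h2 hk
        simp only [hG]
        linarith
      have hlow : -C0 + (k : ℝ) * vstar s - γ * β ≤ G k s (astar s) := by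
        have h1 : -C0 ≤ q 0 (s, astar s) := (abs_le.1 (hC0 s (astar s))).1
        have h3 := (abs_le.1 (hPavg (s, astar s) (B k) β (fun s' => ih s'))).1
        have h4 : γ * (-β) ≤ γ * (∑ s', P (s, astar s) s' * B k s') :=
          mul_le_mul_of_nonneg_left h3 hγ0.le
        have hkeq : (k:ℝ) * vstar s = (k : ℝ) * qstar (s, astar s) := by rw [hvstar]
        simp only [hG]
        nlinarith
      have hu : τ * Real.log (∑ a, Real.exp (G k s a / τ))
          ≤ (Finset.univ.sup' Finset.univ_nonempty fun a => G k s a)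
            + τ * Real.log (Fintype.card A) := lse_le hτ (fun a => G k s a)
      rw [← hκdef] at hu
      have hsup' : (Finset.univ.sup' Finset.univ_nonempty fun a => G k s a)
          ≤ C0 + (k : ℝ) * vstar s + γ * β := Finset.sup'_le _ _ (fun a _ => hup a)
      have hl : G k s (astar s) ≤ τ * Real.log (∑ a, Real.exp (G k s a / τ)) :=
        lse_ge hτ (fun a => G k s a) (astar s)
      have hBs := hBsucc k s
      rw [abs_le]
      constructor
      · rw [hBs]; push_cast; nlinarith
      · rw [hBs]; push_cast; nlinarith
  -- the positive action gap
  set Dset : Finset (S × A) := Finset.univ.filter (fun sa => sa.2 ≠ astar sa.1) with hDset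
  set g : ℝ := if h : Dset.Nonempty then Dset.inf' h (fun sa => vstar sa.1 - qstar sa) else 1
    with hgdef
  have hg0 : 0 < g := by
    rw [hgdef]
    split_ifs with h
    · rw [Finset.lt_inf'_iff]
      rintro ⟨s', a'⟩ hsa
      rw [hDset, Finset.mem_filter] at hsa
      have h1 := hastar s' a' hsa.2
      have h2 : vstar s' = qstar (s', astar s') := by rw [hvstar]
      simp only []
      rw [h2]
      linarith
    · norm_num
  have hgle : ∀ s a, a ≠ astar s → g ≤ vstar s - qstar (s, a) := by
    intro s a ha
    have hmem : (s, a) ∈ Dset := by rw [hDset]; simp [ha]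
    rw [hgdef, dif_pos ⟨(s, a), hmem⟩]
    exact Finset.inf'_le _ hmem
  clear_value Dset g
  have hgap : ∀ k s a, a ≠ astar s →
      G k s a - G k s (astar s) ≤ 2 * C0 + 2 * γ * β - (k : ℝ) * g := by
    intro k s a ha
    have h1 := abs_le.1 (hC0 s a)
    have h2 := abs_le.1 (hC0 s (astar s))
    have h3 := (abs_le.1 (hPavg (s, a) (B k) β (fun s' => hBbound k s'))).2
    have h4 := (abs_le.1 (hPavg (s, astar s) (B k) β (fun s' => hBbound k s'))).1
    have h5 : qstar (s, a) - vstar s ≤ -g := by have := hgle s a ha; linarith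
    have hk : (0:ℝ) ≤ (k:ℝ) := Nat.cast_nonneg k
    have hvs : vstar s = qstar (s, astar s) := by rw [hvstar]
    have h6 : (k:ℝ) * qstar (s, a) - (k:ℝ) * qstar (s, astar s) ≤ -((k:ℝ) * g) := by
      rw [← hvs]
      nlinarith [mul_le_mul_of_nonneg_left h5 hk]
    have h7 : γ * (∑ s', P (s, a) s' * B k s') ≤ γ * β :=
      mul_le_mul_of_nonneg_left h3 hγ0.le
    have h8 : γ * (-β) ≤ γ * (∑ s', P (s, astar s) s' * B k s') :=
      mul_le_mul_of_nonneg_left h4 hγ0.le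
    simp only [hG]
    nlinarith
  -- the optimal-action value and the soft gap
  set u : ℕ → S → ℝ := fun k s => q k (s, astar s) with hudef
  set δ : ℕ → S → ℝ := fun k s => v k s - u k s with hδdef
  clear_value u δ
  have hδ0 : ∀ k s, 0 ≤ δ k s := by
    intro k s
    have h1 := lse_ge hτ (fun a => q k (s, a)) (astar s)
    simp only [hδdef, hudef, hv]
    linarith
  set ρ : ℝ := Real.exp (-g / τ) with hρdef
  have hρpos : 0 < ρ := by rw [hρdef]; exact Real.exp_pos _
  have hρ1 : ρ < 1 := by
    rw [hρdef, Real.exp_lt_one_iff]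
    have : 0 < g / τ := div_pos hg0 hτ
    rw [neg_div]
    linarith
  set E : ℝ := τ * (Fintype.card A : ℝ) * Real.exp ((2 * C0 + 2 * γ * β) / τ) with hEdef
  have hE0 : 0 ≤ E := by
    rw [hEdef]; positivity
  clear_value ρ E
  have hδle : ∀ k s, δ k s ≤ E * ρ ^ k := by
    intro k s
    have hδeq : δ k s = τ * Real.log (∑ a, Real.exp ((G k s a - G k s (astar s)) / τ)) := by
      have h1 : δ k s = τ * Real.log (∑ a, Real.exp (G k s a / τ)) - G k s (astar s) := by
        simp only [hδdef, hudef]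
        have h2 := hqG k s (astar s)
        have h3 := hvVG k s
        linarith
      have h3 : ∀ a, Real.exp ((G k s a - G k s (astar s)) / τ)
          = Real.exp (G k s a / τ) * Real.exp (-(G k s (astar s)) / τ) := by
        intro a; rw [← Real.exp_add]; congr 1; field_simp; ring
      have h4 : ∑ a, Real.exp ((G k s a - G k s (astar s)) / τ)
          = (∑ a, Real.exp (G k s a / τ)) * Real.exp (-(G k s (astar s)) / τ) := by
        rw [Finset.sum_mul]
        exact Finset.sum_congr rfl (fun a _ => h3 a)
      have hGpos : (0:ℝ) < ∑ a, Real.exp (G k s a / τ) :=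
        Finset.sum_pos (fun a _ => Real.exp_pos _) Finset.univ_nonempty
      rw [h4, Real.log_mul (ne_of_gt hGpos) (Real.exp_ne_zero _), Real.log_exp, h1, mul_add]
      have h5 : τ * (-(G k s (astar s)) / τ) = -(G k s (astar s)) := by field_simp
      linarith
    set t : ℝ := ∑ a ∈ Finset.univ.erase (astar s),
        Real.exp ((G k s a - G k s (astar s)) / τ) with htdef
    have ht0 : 0 ≤ t := Finset.sum_nonneg (fun a _ => (Real.exp_pos _).le)
    have hT : ∑ a, Real.exp ((G k s a - G k s (astar s)) / τ) = 1 + t := by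
      rw [htdef, ← Finset.add_sum_erase _ _ (Finset.mem_univ (astar s))]
      simp
    have hlog : Real.log (1 + t) ≤ t := by
      have := Real.log_le_sub_one_of_pos (by linarith : (0:ℝ) < 1 + t)
      linarith
    have htle : t ≤ (Fintype.card A : ℝ) * (Real.exp ((2 * C0 + 2 * γ * β) / τ) * ρ ^ k) := by
      have hterm : ∀ a ∈ Finset.univ.erase (astar s),
          Real.exp ((G k s a - G k s (astar s)) / τ)
            ≤ Real.exp ((2 * C0 + 2 * γ * β) / τ) * ρ ^ k := by
        intro a ha
        have hane : a ≠ astar s := Finset.ne_of_mem_erase ha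
        have hg1 := hgap k s a hane
        have hdiv : (G k s a - G k s (astar s)) / τ
            ≤ (2 * C0 + 2 * γ * β - (k:ℝ) * g) / τ := by gcongr
        calc Real.exp ((G k s a - G k s (astar s)) / τ)
            ≤ Real.exp ((2 * C0 + 2 * γ * β - (k:ℝ) * g) / τ) := Real.exp_le_exp.2 hdiv
          _ = Real.exp ((2 * C0 + 2 * γ * β) / τ) * ρ ^ k := by
              rw [hρdef, ← Real.exp_nat_mul, ← Real.exp_add]
              congr 1
              field_simp
              ring
      calc t ≤ ∑ _a ∈ Finset.univ.erase (astar s),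
              Real.exp ((2 * C0 + 2 * γ * β) / τ) * ρ ^ k := Finset.sum_le_sum hterm
        _ = ((Finset.univ.erase (astar s)).card : ℝ)
              * (Real.exp ((2 * C0 + 2 * γ * β) / τ) * ρ ^ k) := by
            rw [Finset.sum_const, nsmul_eq_mul]
        _ ≤ (Fintype.card A : ℝ) * (Real.exp ((2 * C0 + 2 * γ * β) / τ) * ρ ^ k) := by
            have hcard : ((Finset.univ.erase (astar s)).card : ℝ) ≤ (Fintype.card A : ℝ) := by
              have := Finset.card_le_card (Finset.erase_subset (astar s) Finset.univ)
              rw [Finset.card_univ] at this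
              exact_mod_cast this
            exact mul_le_mul_of_nonneg_right hcard (by positivity)
    rw [hδeq, hT]
    calc τ * Real.log (1 + t) ≤ τ * t := mul_le_mul_of_nonneg_left hlog hτ.le
      _ ≤ τ * ((Fintype.card A : ℝ) * (Real.exp ((2 * C0 + 2 * γ * β) / τ) * ρ ^ k)) :=
          mul_le_mul_of_nonneg_left htle hτ.le
      _ = E * ρ ^ k := by rw [hEdef]; ring
  -- recurrence for the optimal-action value
  have hvud : ∀ k s, v k s = u k s + δ k s := by
    intro k s; simp only [hδdef]; ring
  have hvfix : ∀ s, vstar s = r (s, astar s) + γ * ∑ s', P (s, astar s) s' * vstar s' := by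
    intro s
    have h0 : vstar s = qstar (s, astar s) := by rw [hvstar]
    rw [h0]
    exact hq_fix s (astar s)
  have hurec : ∀ k s, u (k + 1) s
      = r (s, astar s) + γ * ∑ s', P (s, astar s) s' * (u k s' + δ k s') - δ k s := by
    intro k s
    have h2 : ∑ s', P (s, astar s) s' * v k s'
        = ∑ s', P (s, astar s) s' * (u k s' + δ k s') :=
      Finset.sum_congr rfl (fun s' _ => by rw [hvud k s'])
    have h1 := hrec k s (astar s)
    have h3 : u (k + 1) s = q (k + 1) (s, astar s) := by simp only [hudef]
    have h4 : u k s = q k (s, astar s) := by simp only [hudef]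
    have h5 : δ k s = v k s - u k s := by simp only [hδdef]
    rw [h3, h1, h2, h5, h4]
    ring
  -- sup-norm distance to the optimum
  set x : ℕ → ℝ :=
    fun k => Finset.univ.sup' Finset.univ_nonempty (fun s : S => |u k s - vstar s|) with hxdef
  clear_value x
  have hxle : ∀ k s, |u k s - vstar s| ≤ x k := by
    intro k s
    rw [hxdef]
    exact Finset.le_sup' (fun s : S => |u k s - vstar s|) (Finset.mem_univ s)
  have hx0 : ∀ k, 0 ≤ x k :=
    fun k => le_trans (abs_nonneg _) (hxle k (Classical.arbitrary S))
  have hxrec : ∀ k, x (k + 1) ≤ γ * x k + ((1 + γ) * E) * ρ ^ k := by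
    intro k
    have key : ∀ s : S, |u (k + 1) s - vstar s| ≤ γ * x k + ((1 + γ) * E) * ρ ^ k := by
      intro s
      set Y : ℝ := ∑ s', P (s, astar s) s' * ((u k s' - vstar s') + δ k s') with hYdef
      have h1 : u (k + 1) s - vstar s = γ * Y - δ k s := by
        rw [hurec k s, hYdef]
        have h2 : ∑ s', P (s, astar s) s' * ((u k s' - vstar s') + δ k s')
            = (∑ s', P (s, astar s) s' * (u k s' + δ k s'))
              - ∑ s', P (s, astar s) s' * vstar s' := by
          rw [← Finset.sum_sub_distrib]
          exact Finset.sum_congr rfl (fun s' _ => by ring)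
        rw [h2]
        have h3 := hvfix s
        ring_nf
        linarith
      have h3 : |Y| ≤ x k + E * ρ ^ k := by
        rw [hYdef]
        apply hPavg
        intro s'
        calc |(u k s' - vstar s') + δ k s'| ≤ |u k s' - vstar s'| + |δ k s'| := abs_add_le _ _
          _ ≤ x k + E * ρ ^ k := by
              rw [abs_of_nonneg (hδ0 k s')]
              exact add_le_add (hxle k s') (hδle k s')
      have h4 : |γ * Y - δ k s| ≤ γ * |Y| + δ k s := by
        have h5 : |γ * Y - δ k s| ≤ |γ * Y| + |δ k s| := abs_sub _ _
        rw [abs_mul, abs_of_nonneg hγ0.le, abs_of_nonneg (hδ0 k s)] at h5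
        exact h5
      have h6 : γ * |Y| ≤ γ * (x k + E * ρ ^ k) := mul_le_mul_of_nonneg_left h3 hγ0.le
      have h7 := hδle k s
      rw [h1]
      have h8 : (0:ℝ) ≤ ρ ^ k := by positivity
      nlinarith
    calc x (k + 1)
        = Finset.univ.sup' Finset.univ_nonempty
            (fun s : S => |u (k + 1) s - vstar s|) := by rw [hxdef]
      _ ≤ γ * x k + ((1 + γ) * E) * ρ ^ k := Finset.sup'_le _ _ (fun s _ => key s)
  have hxtend : Tendsto x atTop (nhds 0) :=
    decay_lemma hγ0.le hγ1 hρpos.le hρ1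
      (mul_nonneg (by linarith) hE0) x hx0 hxrec
  -- conclusion
  intro s
  constructor
  · have h1 : Tendsto (fun k => u k s - vstar s) atTop (nhds 0) :=
      squeeze_zero_norm (fun k => by simpa [Real.norm_eq_abs] using hxle k s) hxtend
    have h2 := h1.add_const (vstar s)
    simp only [zero_add] at h2
    have h3 : (fun k => u k s - vstar s + vstar s) = fun k => u k s := by
      funext k; ring
    rw [h3] at h2
    have h4 : vstar s = qstar (s, astar s) := by rw [hvstar]
    rw [h4] at h2
    simp only [hudef] at h2
    exact h2
  · intro a ha
    have hqdiff : ∀ k, q k (s, a) = u k s + (G k s a - G k s (astar s)) := by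
      intro k
      rw [hqG k s a]
      simp only [hudef]
      rw [hqG k s (astar s)]
      ring
    have hev : ∀ᶠ k in atTop, x k ≤ 1 := by
      have := hxtend
      filter_upwards [this.eventually (eventually_le_nhds (by norm_num : (0:ℝ) < 1))] with k hk
      exact hk
    have hub : ∀ᶠ k in atTop,
        q k (s, a) ≤ (vstar s + 1 + 2 * C0 + 2 * γ * β) - (k : ℝ) * g := by
      filter_upwards [hev] with k hk
      have h1 := hgap k s a ha
      have h2 := (abs_le.1 (hxle k s)).2
      rw [hqdiff k]
      linarith
    have hlin : Tendsto (fun k : ℕ => (vstar s + 1 + 2 * C0 + 2 * γ * β) - (k : ℝ) * g)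
        atTop atBot := by
      have h1 : Tendsto (fun k : ℕ => (k : ℝ) * g) atTop atTop :=
        Tendsto.atTop_mul_const hg0 tendsto_natCast_atTop_atTop
      have h2 : Tendsto (fun k : ℕ => -((k : ℝ) * g)) atTop atBot :=
        tendsto_neg_atTop_atBot.comp h1
      have h3 := tendsto_atBot_add_const_left atTop (vstar s + 1 + 2 * C0 + 2 * γ * β) h2
      simpa [sub_eq_add_neg] using h3
    exact tendsto_atBot_mono' atTop hub hlin
end

section
/- (Corollary 1.) Let S and A be nonempty finite sets, r : S×A → ℝ with |r(s,a)| ≤ r_max for all (s,a), γ ∈ (0,1), P a transition kernel, τ > 0 and k ≥ 1. Let (π_j, q_j)_{j≥0} be the M-VI(1,τ) sequence with errors (ε_j)_{j≥1}, started from the uniform policy π₀(s)(a) = 1/|A| and from q₀ with ‖q₀ − τ·ln π₀‖∞ ≤ r_max/(1−γ), and assume ‖q_j − τ·ln π_j‖∞ ≤ r_max/(1−γ) for all 1 ≤ j ≤ k. Let q_* be the unique fixed point of the Bellman optimality operator, π_* any deterministic policy greedy with respect to q_* (π_*(s) puts probability 1 on a maximizer of q_*(s,·)), and q_{π_k} the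 unique fixed point of T_{π_k}. Define E_k = −∑_{j=1}^k ε_j and the matrix A¹_k = (I − γP_{π_*})⁻¹ − (I − γP_{π_k})⁻¹ acting on functions S×A → ℝ. Then, componentwise on S×A: 0 ≤ q_* − q_{π_k} ≤ |A¹_k (E_k/k)| + (4/(1−γ)²)·((r_max + τ·ln|A|)/k)·𝟏. -/
open Matrix Finset

section aux
variable {n : Type*} [Fintype n] [Nonempty n] [DecidableEq n]

lemma mviMulVec (γ:ℝ) (B : Matrix n n ℝ) (v : n → ℝ) (i:n) :
    ((1 - γ • B) *ᵥ v) i = v i - γ * ∑ j, B i j * v j := by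
  rw [Matrix.sub_mulVec, Matrix.one_mulVec, Matrix.smul_mulVec]
  simp [Matrix.mulVec, dotProduct]

lemma invpos {γ:ℝ} (hγ0 : 0 ≤ γ) (hγ1 : γ < 1) (B : Matrix n n ℝ)
    (hB0 : ∀ i j, 0 ≤ B i j) (hB1 : ∀ i, ∑ j, B i j = 1)
    (z : n → ℝ) (hz : ∀ i, 0 ≤ ((1 - γ • B) *ᵥ z) i) : ∀ i, 0 ≤ z i := by
  obtain ⟨i0, -, hmin⟩ := Finset.exists_min_image Finset.univ z ⟨Classical.arbitrary n, Finset.mem_univ _⟩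
  have h1 := hz i0
  rw [mviMulVec] at h1
  have h2 : z i0 ≤ ∑ j, B i0 j * z j := by
    calc z i0 = ∑ j, B i0 j * z i0 := by rw [← Finset.sum_mul, hB1, one_mul]
    _ ≤ ∑ j, B i0 j * z j := Finset.sum_le_sum fun j _ =>
        mul_le_mul_of_nonneg_left (hmin j (Finset.mem_univ j)) (hB0 i0 j)
  have h3 : 0 ≤ z i0 := by nlinarith
  intro i; exact h3.trans (hmin i (Finset.mem_univ i))

lemma detunit {γ:ℝ} (hγ0 : 0 ≤ γ) (hγ1 : γ < 1) (B : Matrix n n ℝ)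
    (hB0 : ∀ i j, 0 ≤ B i j) (hB1 : ∀ i, ∑ j, B i j = 1) :
    IsUnit (1 - γ • B).det := by
  rw [isUnit_iff_ne_zero]
  intro hdet
  obtain ⟨v, hv, hMv⟩ := (Matrix.exists_mulVec_eq_zero_iff).mpr hdet
  have h1 : ∀ i, 0 ≤ v i := invpos hγ0 hγ1 B hB0 hB1 v (by intro i; rw [hMv]; exact le_refl 0)
  have h2 : ∀ i, 0 ≤ (-v) i := invpos hγ0 hγ1 B hB0 hB1 (-v)
    (by intro i; rw [Matrix.mulVec_neg, hMv]; simp)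
  apply hv; funext i
  have h1i := h1 i; have h2i := h2 i
  simp only [Pi.neg_apply] at h2i
  simp only [Pi.zero_apply]; linarith

lemma le_inv_mulVec {γ:ℝ} (hγ0 : 0 ≤ γ) (hγ1 : γ < 1) (B : Matrix n n ℝ)
    (hB0 : ∀ i j, 0 ≤ B i j) (hB1 : ∀ i, ∑ j, B i j = 1)
    (z c : n → ℝ) (h : ∀ i, ((1 - γ • B) *ᵥ z) i ≤ c i) :
    ∀ i, z i ≤ ((1 - γ • B)⁻¹ *ᵥ c) i := by
  have hu := detunit hγ0 hγ1 B hB0 hB1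
  have key : ∀ i, 0 ≤ ((1 - γ • B) *ᵥ ((1 - γ • B)⁻¹ *ᵥ c - z)) i := by
    intro i
    rw [Matrix.mulVec_sub, Matrix.mulVec_mulVec, Matrix.mul_nonsing_inv _ hu, Matrix.one_mulVec]
    have := h i; simp only [Pi.sub_apply]; linarith
  have := invpos hγ0 hγ1 B hB0 hB1 _ key
  intro i; have := this i; simp only [Pi.sub_apply] at this; linarith

lemma inv_mulVec_le {γ:ℝ} (hγ0 : 0 ≤ γ) (hγ1 : γ < 1) (B : Matrix n n ℝ)
    (hB0 : ∀ i j, 0 ≤ B i j) (hB1 : ∀ i, ∑ j, B i j = 1)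
    (c z : n → ℝ) (h : ∀ i, c i ≤ ((1 - γ • B) *ᵥ z) i) :
    ∀ i, ((1 - γ • B)⁻¹ *ᵥ c) i ≤ z i := by
  have hu := detunit hγ0 hγ1 B hB0 hB1
  have key : ∀ i, 0 ≤ ((1 - γ • B) *ᵥ (z - (1 - γ • B)⁻¹ *ᵥ c)) i := by
    intro i
    rw [Matrix.mulVec_sub, Matrix.mulVec_mulVec, Matrix.mul_nonsing_inv _ hu, Matrix.one_mulVec]
    have := h i; simp only [Pi.sub_apply]; linarith
  have := invpos hγ0 hγ1 B hB0 hB1 _ key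
  intro i; have := this i; simp only [Pi.sub_apply] at this; linarith

lemma inv_mulVec_norm_le {γ:ℝ} (hγ0 : 0 ≤ γ) (hγ1 : γ < 1) (B : Matrix n n ℝ)
    (hB0 : ∀ i j, 0 ≤ B i j) (hB1 : ∀ i, ∑ j, B i j = 1)
    (c : n → ℝ) (C : ℝ) (hc : ∀ i, |c i| ≤ C) :
    ∀ i, |((1 - γ • B)⁻¹ *ᵥ c) i| ≤ C / (1 - γ) := by
  have hconst : ∀ (s : ℝ), ((1 - γ • B) *ᵥ (fun _ => s)) = fun _ => s * (1-γ) := by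
    intro s; funext i
    rw [mviMulVec]
    have : ∑ j, B i j * s = s := by rw [← Finset.sum_mul, hB1, one_mul]
    rw [this]; ring
  have hub : ∀ i, ((1 - γ • B)⁻¹ *ᵥ c) i ≤ C / (1-γ) := by
    apply inv_mulVec_le hγ0 hγ1 B hB0 hB1 c (fun _ => C / (1-γ))
    intro i; rw [hconst]
    have hne : (1:ℝ)-γ ≠ 0 := by linarith
    have heq : C / (1-γ) * (1-γ) = C := by field_simp
    rw [heq]; exact (abs_le.mp (hc i)).2
  have hlb : ∀ i, -(C / (1-γ)) ≤ ((1 - γ • B)⁻¹ *ᵥ c) i := by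
    have : ∀ i, ((1 - γ • B)⁻¹ *ᵥ (-c)) i ≤ C / (1-γ) := by
      apply inv_mulVec_le hγ0 hγ1 B hB0 hB1 (-c) (fun _ => C / (1-γ))
      intro i; rw [hconst]
      have hne : (1:ℝ)-γ ≠ 0 := by linarith
      have heq : C / (1-γ) * (1-γ) = C := by field_simp
      rw [heq]; simp only [Pi.neg_apply]
      have := abs_le.mp (hc i); linarith
    intro i; have := this i; rw [Matrix.mulVec_neg] at this
    simp only [Pi.neg_apply] at this; linarith
  intro i; rw [abs_le]; exact ⟨hlb i, hub i⟩

lemma negent {A : Type*} [Fintype A] [Nonempty A] (p : A → ℝ) (hp : ∀ a, 0 < p a)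
    (hs : ∑ a, p a = 1) : -Real.log (Fintype.card A) ≤ ∑ a, p a * Real.log (p a) := by
  set N := (Fintype.card A : ℝ) with hN
  have hNpos : (0:ℝ) < N := by
    simp only [hN]; exact_mod_cast Fintype.card_pos
  have key : ∀ a, p a - 1/N ≤ p a * Real.log (N * p a) := by
    intro a
    have h1 : Real.log (1/(N * p a)) ≤ 1/(N * p a) - 1 :=
      Real.log_le_sub_one_of_pos (div_pos one_pos (mul_pos hNpos (hp a)))
    have h2 : Real.log (1/(N * p a)) = -Real.log (N * p a) := by
      rw [one_div, Real.log_inv]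
    rw [h2] at h1
    have h3 : 1 - 1/(N * p a) ≤ Real.log (N * p a) := by linarith
    have := mul_le_mul_of_nonneg_left h3 (hp a).le
    calc p a - 1/N = p a * (1 - 1/(N * p a)) := by
          have h4 : p a ≠ 0 := (hp a).ne'
          have h5 : N ≠ 0 := hNpos.ne'
          field_simp
    _ ≤ p a * Real.log (N * p a) := this
  have hsum := Finset.sum_le_sum (fun a (_ : a ∈ Finset.univ) => key a)
  have hL : ∑ a, (p a - 1/N) = 0 := by
    rw [Finset.sum_sub_distrib, hs, Finset.sum_const]
    simp [hN]
  have hR : ∑ a, p a * Real.log (N * p a) = Real.log N + ∑ a, p a * Real.log (p a) := by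
    have : ∀ a, p a * Real.log (N * p a) = p a * Real.log N + p a * Real.log (p a) := by
      intro a; rw [Real.log_mul (ne_of_gt hNpos) (ne_of_gt (hp a))]; ring
    rw [Finset.sum_congr rfl (fun a _ => this a), Finset.sum_add_distrib, ← Finset.sum_mul, hs, one_mul]
  rw [hL, hR] at hsum; linarith

end aux

set_option maxHeartbeats 1000000 in
/-- Corollary 1 (componentwise bound for M-VI(1,τ)): started from the uniform policy, with
`‖q_j − τ ln π_j‖∞ ≤ r_max/(1−γ)` for `0 ≤ j ≤ k`, writing `E_k = −∑_{j=1}^k ε_j` and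
`A¹_k = (I − γP_{π_*})⁻¹ − (I − γP_{π_k})⁻¹`, one has, componentwise on `S×A`,
`0 ≤ q_* − q_{π_k} ≤ |A¹_k (E_k/k)| + (4/(1−γ)²)((r_max + τ ln|A|)/k) 𝟏`. -/
theorem stmt_15 {S A : Type*} [Fintype S] [Fintype A] [Nonempty S] [Nonempty A]
    [DecidableEq S] [DecidableEq A]
    (r : S × A → ℝ) (rmax : ℝ) (hr : ∀ sa, |r sa| ≤ rmax)
    (γ : ℝ) (hγ : γ ∈ Set.Ioo (0 : ℝ) 1)
    (P : S × A → S → ℝ) (hP0 : ∀ sa s', 0 ≤ P sa s') (hP1 : ∀ sa, ∑ s', P sa s' = 1)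
    (τ : ℝ) (hτ : 0 < τ) (k : ℕ) (hk : 1 ≤ k)
    (π : ℕ → S → A → ℝ) (q : ℕ → S × A → ℝ) (ε : ℕ → S × A → ℝ)
    (hπ0 : ∀ s a, π 0 s a = 1 / (Fintype.card A : ℝ))
    (hπ : ∀ j s a, π (j + 1) s a
      = Real.exp (q j (s, a) / τ) / ∑ a', Real.exp (q j (s, a') / τ))
    (hq : ∀ j s a, q (j + 1) (s, a)
      = r (s, a) + 1 * τ * Real.log (π (j + 1) s a)
        + γ * ∑ s', P (s, a) s' *
            (∑ a', π (j + 1) s' a' * (q j (s', a') - τ * Real.log (π (j + 1) s' a')))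
        + ε (j + 1) (s, a))
    (hq0 : ∀ s a, |q 0 (s, a) - τ * Real.log (π 0 s a)| ≤ rmax / (1 - γ))
    (hbd : ∀ j, 1 ≤ j → j ≤ k →
      ∀ s a, |q j (s, a) - τ * Real.log (π j s a)| ≤ rmax / (1 - γ))
    (qstar : S × A → ℝ)
    (hqstar : ∀ s a, qstar (s, a)
      = r (s, a) + γ * ∑ s', P (s, a) s' *
          (Finset.univ.sup' Finset.univ_nonempty fun a' => qstar (s', a')))
    (πstar : S → A → ℝ)
    (hπstar : ∀ s, ∃ a, (∀ a', qstar (s, a') ≤ qstar (s, a)) ∧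
      ∀ a', πstar s a' = if a' = a then 1 else 0)
    (qπk : S × A → ℝ)
    (hqπk : ∀ s a, qπk (s, a)
      = r (s, a) + γ * ∑ s', P (s, a) s' * (∑ a', π k s' a' * qπk (s', a'))) :
    let Ppol : (S → A → ℝ) → Matrix (S × A) (S × A) ℝ :=
      fun p x y => P x y.1 * p y.1 y.2
    let A1 : Matrix (S × A) (S × A) ℝ :=
      (1 - γ • Ppol πstar)⁻¹ - (1 - γ • Ppol (π k))⁻¹
    let E : S × A → ℝ := fun x => -(∑ j ∈ Finset.Icc 1 k, ε j x)
    ∀ x : S × A,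
      0 ≤ qstar x - qπk x ∧
      qstar x - qπk x
        ≤ |A1.mulVec (fun y => E y / (k : ℝ)) x|
          + 4 / (1 - γ) ^ 2 * ((rmax + τ * Real.log (Fintype.card A)) / (k : ℝ)) := by
  intro Ppol A1 E
  obtain ⟨hγ0, hγ1⟩ := hγ
  have hPpol : ∀ p (x : S × A) (y : S × A), Ppol p x y = P x y.1 * p y.1 y.2 := fun _ _ _ => rfl
  have hA1def : A1 = (1 - γ • Ppol πstar)⁻¹ - (1 - γ • Ppol (π k))⁻¹ := rfl
  have hEdef : ∀ y, E y = -(∑ j ∈ Finset.Icc 1 k, ε j y) := fun _ => rfl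
  choose astar hmax hdet using hπstar
  -- basic definitions
  set hf : ℕ → S × A → ℝ := fun j y => q j y - τ * Real.log (π j y.1 y.2) with hhf
  set Ssum : ℕ → S × A → ℝ := fun j y => ∑ i ∈ Finset.range j, hf i y with hSs
  set w : ℕ → S → ℝ := fun j s => τ * Real.log (∑ a, Real.exp (Ssum j (s, a) / τ)) with hwd
  set L : ℝ := τ * Real.log (Fintype.card A) with hLd
  set vs : S → ℝ := fun s => qstar (s, astar s) with hvsd
  set Mq : S → ℝ := fun s => ∑ a', π k s a' * qπk (s, a') with hMqd
  have hfdef : ∀ j s a, hf j (s, a) = q j (s, a) - τ * Real.log (π j s a) := fun _ _ _ => rfl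
  have hSdef : ∀ j y, Ssum j y = ∑ i ∈ Finset.range j, hf i y := fun _ _ => rfl
  have hSsucc : ∀ j y, Ssum (j + 1) y = Ssum j y + hf j y := by
    intro j y; rw [hSdef, hSdef, Finset.sum_range_succ]
  have hwdef : ∀ j s, w j s = τ * Real.log (∑ a, Real.exp (Ssum j (s, a) / τ)) := fun _ _ => rfl
  have hZpos : ∀ j s, 0 < ∑ a, Real.exp (Ssum j (s, a) / τ) :=
    fun j s => Finset.sum_pos (fun a _ => Real.exp_pos _) Finset.univ_nonempty
  have hcard1 : (1 : ℝ) ≤ (Fintype.card A : ℝ) := by exact_mod_cast Fintype.card_pos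
  have hL0 : 0 ≤ L := by
    rw [hLd]; exact mul_nonneg hτ.le (Real.log_nonneg hcard1)
  -- π is softmax of cumulative sums
  have hπS : ∀ j s a, π j s a
      = Real.exp (Ssum j (s, a) / τ) / ∑ a', Real.exp (Ssum j (s, a') / τ) := by
    intro j
    induction j with
    | zero =>
      intro s a
      have h0 : ∀ a', Ssum 0 (s, a') = 0 := by
        intro a'; rw [hSdef]; simp
      rw [hπ0]
      simp [h0]
    | succ j ih =>
      intro s a
      have hZ := hZpos j s
      have e1 : ∀ a', q j (s, a') / τ
          = Ssum (j + 1) (s, a') / τ - Real.log (∑ a'', Real.exp (Ssum j (s, a'') / τ)) := by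
        intro a'
        have eq : q j (s, a') = hf j (s, a') + τ * Real.log (π j s a') := by
          rw [hfdef]; ring
        rw [eq, ih s a', Real.log_div (Real.exp_ne_zero _) hZ.ne', Real.log_exp,
          hSsucc j (s, a')]
        field_simp
        ring
      have e2 : ∀ a', Real.exp (q j (s, a') / τ)
          = Real.exp (Ssum (j + 1) (s, a') / τ) / (∑ a'', Real.exp (Ssum j (s, a'') / τ)) := by
        intro a'; rw [e1, Real.exp_sub, Real.exp_log hZ]
      rw [hπ j s a, e2 a, Finset.sum_congr rfl fun a' _ => e2 a', ← Finset.sum_div,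
        div_div_div_comm, div_self hZ.ne', div_one]
  have hπpos : ∀ j s a, 0 < π j s a := by
    intro j s a; rw [hπS]; exact div_pos (Real.exp_pos _) (hZpos j s)
  have hπsum : ∀ j s, ∑ a, π j s a = 1 := by
    intro j s
    rw [Finset.sum_congr rfl fun a _ => hπS j s a, ← Finset.sum_div, div_self (hZpos j s).ne']
  have hlnπ : ∀ j s a, τ * Real.log (π j s a) = Ssum j (s, a) - w j s := by
    intro j s a
    rw [hπS j s a, Real.log_div (Real.exp_ne_zero _) (hZpos j s).ne', Real.log_exp, hwdef]
    field_simp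
  have hqS : ∀ j s a, q j (s, a) = Ssum (j + 1) (s, a) - w j s := by
    intro j s a
    have eq : q j (s, a) = hf j (s, a) + τ * Real.log (π j s a) := by rw [hfdef]; ring
    rw [eq, hlnπ j s a, hSsucc j (s, a)]; ring
  -- the effective recursion on hf
  have hrec : ∀ j (y : S × A), hf (j + 1) y
      = r y + γ * (∑ s', P y s' * (w (j + 1) s' - w j s')) + ε (j + 1) y := by
    intro j y
    obtain ⟨s, a⟩ := y
    have einner : ∀ s', ∑ a', π (j + 1) s' a' * (q j (s', a') - τ * Real.log (π (j + 1) s' a'))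
        = w (j + 1) s' - w j s' := by
      intro s'
      have e : ∀ a', q j (s', a') - τ * Real.log (π (j + 1) s' a') = w (j + 1) s' - w j s' := by
        intro a'; rw [hqS j s' a', hlnπ (j + 1) s' a']; ring
      rw [Finset.sum_congr rfl fun a' _ => by rw [e a'], ← Finset.sum_mul, hπsum, one_mul]
    rw [hfdef, hq j s a, Finset.sum_congr rfl fun s' _ => by rw [einner s']]
    ring
  have hw0 : ∀ s, w 0 s = L := by
    intro s
    have h0 : ∀ a', Ssum 0 (s, a') = 0 := by intro a'; rw [hSdef]; simp
    rw [hwdef, hLd]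
    congr 1
    simp [h0]
  set Es : S × A → ℝ := fun y => ∑ j ∈ Finset.range k, ε (j + 1) y with hEsd
  have hE : ∀ y, E y = -Es y := by
    intro y
    rw [hEdef, hEsd]
    congr 1
    rw [← Finset.Ico_add_one_right_eq_Icc, Finset.sum_Ico_eq_sum_range]
    simp [add_comm]
  have hID' : ∀ y : S × A, Ssum k y
      = hf 0 y - hf k y + k * r y + γ * (∑ s', P y s' * (w k s' - L)) + Es y := by
    intro y
    have e1 : Ssum (k + 1) y = hf 0 y + ∑ j ∈ Finset.range k, hf (j + 1) y := by
      rw [hSdef, Finset.sum_range_succ']; ring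
    have e2 : ∑ j ∈ Finset.range k, hf (j + 1) y
        = ∑ j ∈ Finset.range k, (r y + γ * (∑ s', P y s' * (w (j + 1) s' - w j s')) + ε (j + 1) y) :=
      Finset.sum_congr rfl fun j _ => hrec j y
    have e3 : ∑ j ∈ Finset.range k, (r y + γ * (∑ s', P y s' * (w (j + 1) s' - w j s')) + ε (j + 1) y)
        = k * r y + γ * (∑ s', P y s' * (w k s' - w 0 s')) + Es y := by
      rw [Finset.sum_add_distrib, Finset.sum_add_distrib, Finset.sum_const, Finset.card_range,
        nsmul_eq_mul]
      congr 1
      congr 1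
      rw [← Finset.mul_sum, Finset.sum_comm]
      congr 1
      refine Finset.sum_congr rfl fun s' _ => ?_
      rw [← Finset.mul_sum, Finset.sum_range_sub (fun j => w j s')]
    have e4 : Ssum (k + 1) y = Ssum k y + hf k y := hSsucc k y
    have e5 : ∑ s', P y s' * (w k s' - w 0 s') = ∑ s', P y s' * (w k s' - L) :=
      Finset.sum_congr rfl fun s' _ => by rw [hw0]
    rw [e2, e3, e4, e5] at e1
    linarith
  -- pointwise comparisons with the log-sum-exp
  have hSw : ∀ s a, Ssum k (s, a) ≤ w k s := by
    intro s a
    rw [hwdef]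
    have h1 : Real.exp (Ssum k (s, a) / τ) ≤ ∑ a', Real.exp (Ssum k (s, a') / τ) :=
      Finset.single_le_sum (f := fun a' => Real.exp (Ssum k (s, a') / τ))
        (fun a' _ => (Real.exp_pos _).le) (Finset.mem_univ a)
    have h2 : Ssum k (s, a) / τ ≤ Real.log (∑ a', Real.exp (Ssum k (s, a') / τ)) := by
      rw [Real.le_log_iff_exp_le (hZpos k s)]; exact h1
    have h3 := mul_le_mul_of_nonneg_left h2 hτ.le
    calc Ssum k (s, a) = τ * (Ssum k (s, a) / τ) := by field_simp
    _ ≤ τ * Real.log (∑ a', Real.exp (Ssum k (s, a') / τ)) := h3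
  have hMS : ∀ s, w k s - L ≤ ∑ a, π k s a * Ssum k (s, a) := by
    intro s
    have e1 : ∀ a, π k s a * Ssum k (s, a)
        = τ * (π k s a * Real.log (π k s a)) + π k s a * w k s := by
      intro a
      have : Ssum k (s, a) = τ * Real.log (π k s a) + w k s := by rw [hlnπ k s a]; ring
      rw [this]; ring
    rw [Finset.sum_congr rfl fun a _ => e1 a, Finset.sum_add_distrib, ← Finset.mul_sum,
      ← Finset.sum_mul, hπsum, one_mul]
    have hent := negent (π k s) (hπpos k s) (hπsum k s)
    have := mul_le_mul_of_nonneg_left hent hτ.le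
    rw [hLd]
    nlinarith
  -- greedy policy facts
  have hMπstar : ∀ s (f : A → ℝ), ∑ a', πstar s a' * f a' = f (astar s) := by
    intro s f
    rw [Finset.sum_congr rfl fun a' _ => by rw [hdet s a']]
    simp only [ite_mul, one_mul, zero_mul, Finset.sum_ite_eq', Finset.mem_univ, if_true]
  have hqstar' : ∀ s a, qstar (s, a) = r (s, a) + γ * ∑ s', P (s, a) s' * vs s' := by
    intro s a
    rw [hqstar s a]
    congr 1
    congr 1
    refine Finset.sum_congr rfl fun s' _ => ?_
    congr 1
    refine le_antisymm (Finset.sup'_le _ _ fun a' _ => hmax s' a') ?_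
    exact Finset.le_sup' (fun a' => qstar (s', a')) (Finset.mem_univ (astar s'))
  -- matrix facts
  have hB0s : ∀ (y y' : S × A), 0 ≤ Ppol πstar y y' := by
    intro y y'
    rw [hPpol, hdet]
    refine mul_nonneg (hP0 _ _) ?_
    split <;> norm_num
  have hB0k : ∀ (y y' : S × A), 0 ≤ Ppol (π k) y y' := by
    intro y y'
    rw [hPpol]
    exact mul_nonneg (hP0 _ _) (hπpos k _ _).le
  have hrowsum : ∀ (p : S → A → ℝ), (∀ s, ∑ a, p s a = 1) → ∀ y : S × A, ∑ y', Ppol p y y' = 1 := by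
    intro p hp y
    rw [Fintype.sum_prod_type]
    calc ∑ s', ∑ a', Ppol p y (s', a') = ∑ s', P y s' * ∑ a', p s' a' := by
          refine Finset.sum_congr rfl fun s' _ => ?_
          rw [Finset.mul_sum]
    _ = 1 := by
          rw [Finset.sum_congr rfl fun s' _ => by rw [hp s', mul_one]]
          exact hP1 y
  have hB1s : ∀ y : S × A, ∑ y', Ppol πstar y y' = 1 := by
    refine hrowsum πstar (fun s => ?_)
    rw [Finset.sum_congr rfl fun a' _ => hdet s a']
    simp
  have hB1k : ∀ y : S × A, ∑ y', Ppol (π k) y y' = 1 := hrowsum (π k) (hπsum k)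
  have hmvk : ∀ (z : S × A → ℝ) (y : S × A),
      ((1 - γ • Ppol (π k)) *ᵥ z) y
        = z y - γ * ∑ s', P y s' * ∑ a', π k s' a' * z (s', a') := by
    intro z y
    rw [mviMulVec]
    congr 1
    congr 1
    rw [Fintype.sum_prod_type]
    refine Finset.sum_congr rfl fun s' _ => ?_
    rw [Finset.mul_sum]
    refine Finset.sum_congr rfl fun a' _ => ?_
    rw [hPpol]
    ring
  have hmvs : ∀ (z : S × A → ℝ) (y : S × A),
      ((1 - γ • Ppol πstar) *ᵥ z) y = z y - γ * ∑ s', P y s' * z (s', astar s') := by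
    intro z y
    rw [mviMulVec]
    congr 1
    congr 1
    rw [Fintype.sum_prod_type]
    refine Finset.sum_congr rfl fun s' _ => ?_
    calc ∑ a', Ppol πstar y (s', a') * z (s', a')
        = P y s' * ∑ a', πstar s' a' * z (s', a') := by
          rw [Finset.mul_sum]
          refine Finset.sum_congr rfl fun a' _ => ?_
          rw [hPpol]; ring
    _ = P y s' * z (s', astar s') := by rw [hMπstar s' (fun a' => z (s', a'))]
  -- Part 1 : 0 ≤ qstar - qπk
  have hMqstar : ∀ s', ∑ a', π k s' a' * qstar (s', a') ≤ vs s' := by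
    intro s'
    calc ∑ a', π k s' a' * qstar (s', a') ≤ ∑ a', π k s' a' * vs s' :=
          Finset.sum_le_sum fun a' _ =>
            mul_le_mul_of_nonneg_left (hmax s' a') (hπpos k s' a').le
    _ = vs s' := by rw [← Finset.sum_mul, hπsum, one_mul]
  have part1 : ∀ y : S × A, 0 ≤ qstar y - qπk y := by
    refine invpos hγ0.le hγ1 (Ppol (π k)) hB0k hB1k _ (fun y => ?_)
    rw [hmvk]
    obtain ⟨s, a⟩ := y
    have key : ∑ s', P (s, a) s' * ∑ a', π k s' a' * (qstar (s', a') - qπk (s', a'))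
        ≤ ∑ s', P (s, a) s' * vs s' - ∑ s', P (s, a) s' * Mq s' := by
      rw [← Finset.sum_sub_distrib]
      refine Finset.sum_le_sum fun s' _ => ?_
      have e : ∑ a', π k s' a' * (qstar (s', a') - qπk (s', a'))
          = (∑ a', π k s' a' * qstar (s', a')) - Mq s' := by
        rw [← Finset.sum_sub_distrib]
        exact Finset.sum_congr rfl fun a' _ => by ring
      rw [e, ← mul_sub]
      exact mul_le_mul_of_nonneg_left (sub_le_sub_right (hMqstar s') _) (hP0 _ _)
    have e1 : qstar (s, a) = r (s, a) + γ * ∑ s', P (s, a) s' * vs s' := hqstar' s a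
    have e2 : qπk (s, a) = r (s, a) + γ * ∑ s', P (s, a) s' * Mq s' := hqπk s a
    have := mul_le_mul_of_nonneg_left key hγ0.le
    linarith
  -- Part 2
  set zA : S × A → ℝ := fun y => (k : ℝ) * qstar y - Ssum k y with hzAd
  set zB : S × A → ℝ := fun y => (k : ℝ) * qπk y - Ssum k y with hzBd
  set cB : S × A → ℝ := fun y => E y + (hf k y - hf 0 y) with hcBd
  set cA : S × A → ℝ := fun y => E y + (hf k y - hf 0 y + L) with hcAd
  have hzA : ∀ y : S × A, zA y
      = hf k y - hf 0 y - Es y + γ * ∑ s', P y s' * ((k : ℝ) * vs s' - w k s' + L) := by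
    intro y
    obtain ⟨s, a⟩ := y
    have e2 : (k : ℝ) * ∑ s', P (s, a) s' * vs s' - ∑ s', P (s, a) s' * (w k s' - L)
        = ∑ s', P (s, a) s' * ((k : ℝ) * vs s' - w k s' + L) := by
      rw [Finset.mul_sum, ← Finset.sum_sub_distrib]
      exact Finset.sum_congr rfl fun s' _ => by ring
    have e1 : zA (s, a) = (k : ℝ) * qstar (s, a) - Ssum k (s, a) := rfl
    rw [e1, hqstar' s a, hID' (s, a)]
    linear_combination γ * e2
  have hzB : ∀ y : S × A, zB y
      = hf k y - hf 0 y - Es y + γ * ∑ s', P y s' * ((k : ℝ) * Mq s' - w k s' + L) := by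
    intro y
    obtain ⟨s, a⟩ := y
    have e2 : (k : ℝ) * ∑ s', P (s, a) s' * Mq s' - ∑ s', P (s, a) s' * (w k s' - L)
        = ∑ s', P (s, a) s' * ((k : ℝ) * Mq s' - w k s' + L) := by
      rw [Finset.mul_sum, ← Finset.sum_sub_distrib]
      exact Finset.sum_congr rfl fun s' _ => by ring
    have e1 : zB (s, a) = (k : ℝ) * qπk (s, a) - Ssum k (s, a) := rfl
    rw [e1, hqπk s a, hID' (s, a)]
    linear_combination γ * e2
  have claimA : ∀ y : S × A, ((1 - γ • Ppol πstar) *ᵥ zA) y ≤ cA y := by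
    intro y
    rw [hmvs, hzA y]
    have e3 : ∑ s', P y s' * ((k : ℝ) * vs s' - w k s' + L) - ∑ s', P y s' * zA (s', astar s')
        = ∑ s', P y s' * (((k : ℝ) * vs s' - w k s' + L) - zA (s', astar s')) := by
      rw [← Finset.sum_sub_distrib]
      exact Finset.sum_congr rfl fun s' _ => by ring
    have e4 : ∑ s', P y s' * (((k : ℝ) * vs s' - w k s' + L) - zA (s', astar s')) ≤ L := by
      calc ∑ s', P y s' * (((k : ℝ) * vs s' - w k s' + L) - zA (s', astar s'))
          ≤ ∑ s', P y s' * L := by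
            refine Finset.sum_le_sum fun s' _ => ?_
            refine mul_le_mul_of_nonneg_left ?_ (hP0 _ _)
            have e5 : zA (s', astar s') = (k : ℝ) * vs s' - Ssum k (s', astar s') := rfl
            rw [e5]
            have := hSw s' (astar s')
            linarith
      _ = L := by rw [← Finset.sum_mul, hP1, one_mul]
    have e6 : cA y = -Es y + (hf k y - hf 0 y + L) := by
      show E y + (hf k y - hf 0 y + L) = _
      rw [hE y]
    have e7 : γ * (∑ s', P y s' * ((k : ℝ) * vs s' - w k s' + L)
        - ∑ s', P y s' * zA (s', astar s')) ≤ γ * L := by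
      refine mul_le_mul_of_nonneg_left ?_ hγ0.le
      rw [e3]; exact e4
    have e8 : γ * L ≤ L := by nlinarith
    rw [e6]
    nlinarith [e7]
  have claimB : ∀ y : S × A, cB y ≤ ((1 - γ • Ppol (π k)) *ᵥ zB) y := by
    intro y
    rw [hmvk, hzB y]
    have e5 : ∀ s', ∑ a', π k s' a' * zB (s', a')
        = (k : ℝ) * Mq s' - ∑ a', π k s' a' * Ssum k (s', a') := by
      intro s'
      rw [hMqd]
      show ∑ a', π k s' a' * ((k : ℝ) * qπk (s', a') - Ssum k (s', a')) = _
      rw [Finset.mul_sum, ← Finset.sum_sub_distrib]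
      exact Finset.sum_congr rfl fun a' _ => by ring
    have e3 : ∑ s', P y s' * ((k : ℝ) * Mq s' - w k s' + L)
        - ∑ s', P y s' * (∑ a', π k s' a' * zB (s', a'))
        = ∑ s', P y s' * ((∑ a', π k s' a' * Ssum k (s', a')) - w k s' + L) := by
      rw [← Finset.sum_sub_distrib]
      refine Finset.sum_congr rfl fun s' _ => ?_
      rw [e5 s']
      ring
    have e4 : 0 ≤ ∑ s', P y s' * ((∑ a', π k s' a' * Ssum k (s', a')) - w k s' + L) := by
      refine Finset.sum_nonneg fun s' _ => mul_nonneg (hP0 _ _) ?_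
      have := hMS s'
      linarith
    have e6 : cB y = -Es y + (hf k y - hf 0 y) := by
      show E y + (hf k y - hf 0 y) = _
      rw [hE y]
    rw [e6]
    nlinarith [mul_le_mul_of_nonneg_left (e3 ▸ e4) hγ0.le]
  -- invert the two claims
  have hGinv : ∀ y, zA y ≤ ((1 - γ • Ppol πstar)⁻¹ *ᵥ cA) y :=
    le_inv_mulVec hγ0.le hγ1 _ hB0s hB1s zA cA claimA
  have hHinv : ∀ y, ((1 - γ • Ppol (π k))⁻¹ *ᵥ cB) y ≤ zB y :=
    inv_mulVec_le hγ0.le hγ1 _ hB0k hB1k cB zB claimB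
  -- split off the error part
  have hcA : cA = E + fun y => hf k y - hf 0 y + L := rfl
  have hcB : cB = E + fun y => hf k y - hf 0 y := rfl
  have hsplitA : ∀ y, ((1 - γ • Ppol πstar)⁻¹ *ᵥ cA) y
      = ((1 - γ • Ppol πstar)⁻¹ *ᵥ E) y
        + ((1 - γ • Ppol πstar)⁻¹ *ᵥ fun y => hf k y - hf 0 y + L) y := by
    intro y; rw [hcA, Matrix.mulVec_add]; rfl
  have hsplitB : ∀ y, ((1 - γ • Ppol (π k))⁻¹ *ᵥ cB) y
      = ((1 - γ • Ppol (π k))⁻¹ *ᵥ E) y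
        + ((1 - γ • Ppol (π k))⁻¹ *ᵥ fun y => hf k y - hf 0 y) y := by
    intro y; rw [hcB, Matrix.mulVec_add]; rfl
  set R : ℝ := rmax / (1 - γ) with hRd
  have hRk : ∀ y : S × A, |hf k y| ≤ R := by rintro ⟨s, a⟩; exact hbd k hk le_rfl s a
  have hR0 : ∀ y : S × A, |hf 0 y| ≤ R := by rintro ⟨s, a⟩; exact hq0 s a
  have hGuL : ∀ y, |((1 - γ • Ppol πstar)⁻¹ *ᵥ fun y => hf k y - hf 0 y + L) y|
      ≤ (2 * R + L) / (1 - γ) := by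
    refine inv_mulVec_norm_le hγ0.le hγ1 _ hB0s hB1s _ (2 * R + L) (fun y => ?_)
    have h1 := abs_le.mp (hRk y)
    have h2 := abs_le.mp (hR0 y)
    rw [abs_le]
    constructor <;> [nlinarith; nlinarith]
  have hHu : ∀ y, |((1 - γ • Ppol (π k))⁻¹ *ᵥ fun y => hf k y - hf 0 y) y|
      ≤ 2 * R / (1 - γ) := by
    refine inv_mulVec_norm_le hγ0.le hγ1 _ hB0k hB1k _ (2 * R) (fun y => ?_)
    have h1 := abs_le.mp (hRk y)
    have h2 := abs_le.mp (hR0 y)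
    rw [abs_le]
    constructor <;> [nlinarith; nlinarith]
  have hA1E : ∀ y, (A1 *ᵥ fun y' => E y' / (k : ℝ)) y
      = (((1 - γ • Ppol πstar)⁻¹ *ᵥ E) y - ((1 - γ • Ppol (π k))⁻¹ *ᵥ E) y) / (k : ℝ) := by
    intro y
    rw [hA1def, Matrix.sub_mulVec]
    have hdiv : ∀ (M : Matrix (S × A) (S × A) ℝ),
        (M *ᵥ fun y' => E y' / (k : ℝ)) y = (M *ᵥ E) y / (k : ℝ) := by
      intro M
      simp only [Matrix.mulVec, dotProduct]
      rw [Finset.sum_div]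
      exact Finset.sum_congr rfl fun _ _ => by ring
    simp only [Pi.sub_apply]
    rw [hdiv, hdiv]
    ring
  -- conclusion
  intro x
  refine ⟨part1 x, ?_⟩
  have hkpos : (0 : ℝ) < (k : ℝ) := by
    have : 0 < k := hk
    exact_mod_cast this
  have hrmax0 : 0 ≤ rmax := le_trans (abs_nonneg _) (hr x)
  have h1γ : 0 < 1 - γ := by linarith
  have hkd : (k : ℝ) * (qstar x - qπk x) = zA x - zB x := by
    show _ = ((k : ℝ) * qstar x - Ssum k x) - ((k : ℝ) * qπk x - Ssum k x)
    ring
  have step1 : (k : ℝ) * (qstar x - qπk x)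
      ≤ (((1 - γ • Ppol πstar)⁻¹ *ᵥ E) x - ((1 - γ • Ppol (π k))⁻¹ *ᵥ E) x)
        + ((2 * R + L) / (1 - γ) + 2 * R / (1 - γ)) := by
    rw [hkd]
    have hA := hsplitA x
    have hB := hsplitB x
    have h1 := (abs_le.mp (hGuL x)).2
    have h2 := (abs_le.mp (hHu x)).1
    have h3 := hGinv x
    have h4 := hHinv x
    linarith
  have habs : (((1 - γ • Ppol πstar)⁻¹ *ᵥ E) x - ((1 - γ • Ppol (π k))⁻¹ *ᵥ E) x) / (k : ℝ)
      ≤ |(A1 *ᵥ fun y' => E y' / (k : ℝ)) x| := by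
    rw [← hA1E x]; exact le_abs_self _
  have hstep2 : (2 * R + L) / (1 - γ) + 2 * R / (1 - γ) ≤ 4 / (1 - γ) ^ 2 * (rmax + L) := by
    have e1 : (2 * R + L) / (1 - γ) + 2 * R / (1 - γ) = (4 * rmax + L * (1 - γ)) / (1 - γ) ^ 2 := by
      rw [hRd]; field_simp; ring
    have e2 : 4 / (1 - γ) ^ 2 * (rmax + L) = (4 * rmax + 4 * L) / (1 - γ) ^ 2 := by ring
    rw [e1, e2]
    refine (div_le_div_iff_of_pos_right (by positivity)).mpr ?_
    nlinarith
  refine le_of_mul_le_mul_left ?_ hkpos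
  calc (k : ℝ) * (qstar x - qπk x)
      ≤ (k : ℝ) * ((((1 - γ • Ppol πstar)⁻¹ *ᵥ E) x - ((1 - γ • Ppol (π k))⁻¹ *ᵥ E) x) / (k : ℝ))
        + 4 / (1 - γ) ^ 2 * (rmax + L) := by
        have e : (k : ℝ) * ((((1 - γ • Ppol πstar)⁻¹ *ᵥ E) x
            - ((1 - γ • Ppol (π k))⁻¹ *ᵥ E) x) / (k : ℝ))
            = ((1 - γ • Ppol πstar)⁻¹ *ᵥ E) x - ((1 - γ • Ppol (π k))⁻¹ *ᵥ E) x := by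
          field_simp
        rw [e]
        linarith
  _ ≤ (k : ℝ) * |(A1 *ᵥ fun y' => E y' / (k : ℝ)) x| + 4 / (1 - γ) ^ 2 * (rmax + L) := by
        have := mul_le_mul_of_nonneg_left habs hkpos.le
        linarith
  _ = (k : ℝ) * (|(A1 *ᵥ fun y' => E y' / (k : ℝ)) x| + 4 / (1 - γ) ^ 2 * ((rmax + L) / (k : ℝ))) := by
        field_simp
end

section
/- Let S and A be nonempty finite sets, r : S×A → ℝ with |r(s,a)| ≤ r_max for all (s,a), γ ∈ (0,1), P a transition kernel, τ > 0 and k ≥ 1. Let (π_j, q_j)_{j≥0} be the M-VI(1,τ) sequence with errors (ε_j)_{j≥1}, started from the uniform policy π₀(s)(a) = 1/|A| and from q₀ with ‖q₀ − τ·ln π₀‖∞ ≤ r_max/(1−γ), and assume ‖q_j − τ·ln π_j‖∞ ≤ r_max/(1−γ) for all 1 ≤ j ≤ k. Let q_* be the unique fixed point of the Bellman optimality operator and q_{π_k} the unique fixed point of T_{π_k}. Then ‖q_* − q_{π_k}‖∞ ≤ (2/(1−γ))·‖(1/k)·∑_{j=1}^k ε_j‖∞ + (4/(1−γ)²)·(r_max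 + τ·ln|A|)/k. -/
section Helpers

lemma avg_le {ι : Type*} [Fintype ι] (p x : ι → ℝ) (c : ℝ) (hp : ∀ i, 0 ≤ p i)
    (h1 : ∑ i, p i = 1) (hx : ∀ i, x i ≤ c) : ∑ i, p i * x i ≤ c := by
  calc ∑ i, p i * x i ≤ ∑ i, p i * c := by
        exact Finset.sum_le_sum fun i _ => mul_le_mul_of_nonneg_left (hx i) (hp i)
    _ = c := by rw [← Finset.sum_mul, h1, one_mul]

lemma contr {X : Type*} [Fintype X] [Nonempty X] (u : X → ℝ) (γ c : ℝ)
    (h : ∀ x, u x ≤ γ * (Finset.univ.sup' Finset.univ_nonempty u) + c) :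
    (1 - γ) * (Finset.univ.sup' Finset.univ_nonempty u) ≤ c := by
  obtain ⟨x, -, hx⟩ := Finset.exists_mem_eq_sup' (Finset.univ_nonempty (α := X)) u
  rw [hx]
  rw [hx] at h
  linarith [h x]

lemma entropy_le {A : Type*} [Fintype A] [Nonempty A] (p : A → ℝ) (hp : ∀ a, 0 < p a)
    (h1 : ∑ a, p a = 1) : ∑ a, p a * (-Real.log (p a)) ≤ Real.log (Fintype.card A) := by
  have hcard : (0:ℝ) < Fintype.card A := by
    have := Fintype.card_pos (α := A); exact_mod_cast this
  have key : ∀ a, p a * (-Real.log (p a)) ≤ 1 / Fintype.card A - p a + p a * Real.log (Fintype.card A) := by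
    intro a
    have hpa' := hp a
    have h2 : Real.log (1 / (Fintype.card A * p a)) ≤ 1 / (Fintype.card A * p a) - 1 :=
      Real.log_le_sub_one_of_pos (by positivity)
    have h3 : Real.log (1 / (Fintype.card A * p a)) = -Real.log (Fintype.card A) - Real.log (p a) := by
      rw [one_div, Real.log_inv, Real.log_mul (ne_of_gt hcard) (ne_of_gt (hp a))]; ring
    rw [h3] at h2
    have hpa := hp a
    have e : p a * (1 / (Fintype.card A * p a)) = 1 / Fintype.card A := by
      field_simp
    nlinarith [mul_le_mul_of_nonneg_left h2 (le_of_lt hpa)]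
  calc ∑ a, p a * (-Real.log (p a)) ≤ ∑ a, (1 / Fintype.card A - p a + p a * Real.log (Fintype.card A)) :=
        Finset.sum_le_sum fun a _ => key a
    _ = Real.log (Fintype.card A) := by
        rw [Finset.sum_add_distrib, Finset.sum_sub_distrib, ← Finset.sum_mul, h1,
          Finset.sum_const, Finset.card_univ]
        have hn : (Fintype.card A) • ((1:ℝ) / Fintype.card A) = 1 := by
          rw [nsmul_eq_mul]; field_simp
        rw [hn]; ring

end Helpers

section MVI

variable {S A : Type*} [Fintype S] [Fintype A] [Nonempty S] [Nonempty A]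

noncomputable def Tf (τ : ℝ) (π : ℕ → S → A → ℝ) (q : ℕ → S × A → ℝ) (j : ℕ) (x : S × A) : ℝ :=
  ∑ i ∈ Finset.range j, (q i x - τ * Real.log (π i x.1 x.2))

noncomputable def Λf (τ : ℝ) (π : ℕ → S → A → ℝ) (q : ℕ → S × A → ℝ) (j : ℕ) (s : S) : ℝ :=
  τ * Real.log (∑ a, Real.exp (Tf τ π q j (s, a) / τ))

lemma Tf_succ (τ : ℝ) (π : ℕ → S → A → ℝ) (q : ℕ → S × A → ℝ) (j : ℕ) (x : S × A) :
    Tf τ π q (j+1) x = Tf τ π q j x + (q j x - τ * Real.log (π j x.1 x.2)) :=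
  Finset.sum_range_succ _ j

variable (τ : ℝ) (hτ : 0 < τ) (π : ℕ → S → A → ℝ) (q : ℕ → S × A → ℝ)
  (hπ0 : ∀ s a, π 0 s a = 1 / (Fintype.card A : ℝ))
  (hπ : ∀ j s a, π (j + 1) s a
      = Real.exp (q j (s, a) / τ) / ∑ a', Real.exp (q j (s, a') / τ))

include hτ hπ0 hπ in
lemma softmax_form : ∀ j s a, π j s a
    = Real.exp (Tf τ π q j (s, a) / τ) / ∑ a', Real.exp (Tf τ π q j (s, a') / τ) := by
  intro j
  induction j with
  | zero =>
    intro s a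
    have hT0 : ∀ a : A, Tf τ π q 0 (s, a) = 0 := fun a => by simp [Tf]
    rw [hπ0, hT0]
    simp [hT0]
  | succ j ih =>
    intro s a
    -- log form at step j
    have hD : ∀ s : S, (0:ℝ) < ∑ a', Real.exp (Tf τ π q j (s, a') / τ) :=
      fun s => Finset.sum_pos (fun _ _ => Real.exp_pos _) Finset.univ_nonempty
    have hlog : ∀ s a, τ * Real.log (π j s a) = Tf τ π q j (s, a) - Λf τ π q j s := by
      intro s a
      rw [ih s a, Real.log_div (ne_of_gt (Real.exp_pos _)) (ne_of_gt (hD s)), Real.log_exp, Λf]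
      field_simp
    have hqj : ∀ s a, q j (s, a) = Tf τ π q (j+1) (s, a) - Λf τ π q j s := by
      intro s a
      have := Tf_succ τ π q j (s, a)
      simp only [] at this
      have h2 := hlog s a
      linarith [this, h2]
    rw [hπ j s a]
    have hrw : ∀ a' : A, Real.exp (q j (s, a') / τ)
        = Real.exp (Tf τ π q (j+1) (s, a') / τ) * Real.exp (-(Λf τ π q j s) / τ) := by
      intro a'
      rw [← Real.exp_add, hqj]
      ring_nf
    rw [hrw a]
    have : (∑ a', Real.exp (q j (s, a') / τ))
        = (∑ a', Real.exp (Tf τ π q (j+1) (s, a') / τ)) * Real.exp (-(Λf τ π q j s) / τ) := by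
      rw [Finset.sum_mul]
      exact Finset.sum_congr rfl fun a' _ => hrw a'
    rw [this, mul_div_mul_right _ _ (ne_of_gt (Real.exp_pos _))]

include hτ hπ0 hπ in
lemma pi_pos : ∀ j s a, 0 < π j s a := by
  intro j s a
  rw [softmax_form τ hτ π q hπ0 hπ j s a]
  exact div_pos (Real.exp_pos _) (Finset.sum_pos (fun _ _ => Real.exp_pos _) Finset.univ_nonempty)

include hτ hπ0 hπ in
lemma pi_sum : ∀ j s, ∑ a, π j s a = 1 := by
  intro j s
  have hD : (0:ℝ) < ∑ a', Real.exp (Tf τ π q j (s, a') / τ) :=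
    Finset.sum_pos (fun _ _ => Real.exp_pos _) Finset.univ_nonempty
  have : ∑ a, π j s a = (∑ a, Real.exp (Tf τ π q j (s, a) / τ)) / (∑ a', Real.exp (Tf τ π q j (s, a') / τ)) := by
    rw [Finset.sum_div]
    exact Finset.sum_congr rfl fun a _ => softmax_form τ hτ π q hπ0 hπ j s a
  rw [this, div_self (ne_of_gt hD)]

include hτ hπ0 hπ in
lemma log_form : ∀ j s a, τ * Real.log (π j s a) = Tf τ π q j (s, a) - Λf τ π q j s := by
  intro j s a
  have hD : (0:ℝ) < ∑ a', Real.exp (Tf τ π q j (s, a') / τ) :=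
    Finset.sum_pos (fun _ _ => Real.exp_pos _) Finset.univ_nonempty
  rw [softmax_form τ hτ π q hπ0 hπ j s a,
    Real.log_div (ne_of_gt (Real.exp_pos _)) (ne_of_gt hD), Real.log_exp, Λf]
  field_simp

include hτ hπ0 hπ in
lemma q_form : ∀ j s a, q j (s, a) = Tf τ π q (j+1) (s, a) - Λf τ π q j s := by
  intro j s a
  have h1 := Tf_succ τ π q j (s, a)
  have h2 := log_form τ hτ π q hπ0 hπ j s a
  simp only [] at h1
  linarith

variable (r : S × A → ℝ) (γ : ℝ) (P : S × A → S → ℝ) (ε : ℕ → S × A → ℝ)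
  (hq : ∀ j s a, q (j + 1) (s, a)
      = r (s, a) + 1 * τ * Real.log (π (j + 1) s a)
        + γ * ∑ s', P (s, a) s' *
            (∑ a', π (j + 1) s' a' * (q j (s', a') - τ * Real.log (π (j + 1) s' a')))
        + ε (j + 1) (s, a))

include hτ hπ0 hπ hq in
lemma qprime_step : ∀ j s a, q (j+1) (s, a) - τ * Real.log (π (j+1) s a)
    = r (s, a) + γ * ∑ s', P (s, a) s' * (Λf τ π q (j+1) s' - Λf τ π q j s')
      + ε (j+1) (s, a) := by
  intro j s a
  have hinner : ∀ s' : S, (∑ a', π (j+1) s' a' * (q j (s', a') - τ * Real.log (π (j+1) s' a')))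
      = Λf τ π q (j+1) s' - Λf τ π q j s' := by
    intro s'
    have hval : ∀ a' : A, q j (s', a') - τ * Real.log (π (j+1) s' a')
        = Λf τ π q (j+1) s' - Λf τ π q j s' := by
      intro a'
      have h1 := q_form τ hτ π q hπ0 hπ j s' a'
      have h2 := log_form τ hτ π q hπ0 hπ (j+1) s' a'
      linarith
    calc (∑ a', π (j+1) s' a' * (q j (s', a') - τ * Real.log (π (j+1) s' a')))
        = ∑ a', π (j+1) s' a' * (Λf τ π q (j+1) s' - Λf τ π q j s') :=
          Finset.sum_congr rfl fun a' _ => by rw [hval a']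
      _ = (∑ a', π (j+1) s' a') * (Λf τ π q (j+1) s' - Λf τ π q j s') := by
          rw [Finset.sum_mul]
      _ = Λf τ π q (j+1) s' - Λf τ π q j s' := by
          rw [pi_sum τ hτ π q hπ0 hπ (j+1) s', one_mul]
  rw [hq j s a]
  have : (∑ s', P (s, a) s' * (∑ a', π (j+1) s' a' * (q j (s', a') - τ * Real.log (π (j+1) s' a'))))
      = ∑ s', P (s, a) s' * (Λf τ π q (j+1) s' - Λf τ π q j s') :=
    Finset.sum_congr rfl fun s' _ => by rw [hinner s']
  rw [this]
  ring

include hτ hπ0 hπ hq in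
lemma telescope (k : ℕ) : ∀ s a, Tf τ π q (k+1) (s, a)
    = (q 0 (s, a) - τ * Real.log (π 0 s a)) + (k : ℝ) * r (s, a)
      + γ * ∑ s', P (s, a) s' * (Λf τ π q k s' - Λf τ π q 0 s')
      + ∑ j ∈ Finset.Icc 1 k, ε j (s, a) := by
  intro s a
  have hsplit : Tf τ π q (k+1) (s, a)
      = (∑ i ∈ Finset.range k, (q (i+1) (s, a) - τ * Real.log (π (i+1) s a)))
        + (q 0 (s, a) - τ * Real.log (π 0 s a)) := by
    exact Finset.sum_range_succ' _ k
  rw [hsplit]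
  have hterm : ∀ i, (q (i+1) (s, a) - τ * Real.log (π (i+1) s a))
      = r (s, a) + γ * ∑ s', P (s, a) s' * (Λf τ π q (i+1) s' - Λf τ π q i s')
        + ε (i+1) (s, a) := fun i => qprime_step τ hτ π q hπ0 hπ r γ P ε hq i s a
  rw [Finset.sum_congr rfl fun i _ => hterm i]
  rw [Finset.sum_add_distrib, Finset.sum_add_distrib, Finset.sum_const, Finset.card_range,
    nsmul_eq_mul]
  have hmid : (∑ i ∈ Finset.range k, γ * ∑ s', P (s, a) s' * (Λf τ π q (i+1) s' - Λf τ π q i s'))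
      = γ * ∑ s', P (s, a) s' * (Λf τ π q k s' - Λf τ π q 0 s') := by
    rw [← Finset.mul_sum]
    congr 1
    rw [Finset.sum_comm]
    refine Finset.sum_congr rfl fun s' _ => ?_
    rw [← Finset.mul_sum, Finset.sum_range_sub (fun i => Λf τ π q i s')]
  have hε : (∑ i ∈ Finset.range k, ε (i+1) (s, a)) = ∑ j ∈ Finset.Icc 1 k, ε j (s, a) := by
    have hI : Finset.Icc 1 k = Finset.Ico 1 (k+1) := by rw [Finset.Ico_add_one_right_eq_Icc]
    rw [hI, Finset.sum_Ico_eq_sum_range]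
    simp [add_comm]
  rw [hmid, hε]
  ring

end MVI

/-- Sup-norm error-averaging bound for M-VI(1,τ): under the assumptions of Corollary 1,
`‖q_* − q_{π_k}‖∞ ≤ (2/(1−γ)) ‖(1/k) ∑_{j=1}^k ε_j‖∞ + (4/(1−γ)²)(r_max + τ ln|A|)/k`. -/
theorem stmt_16 {S A : Type*} [Fintype S] [Fintype A] [Nonempty S] [Nonempty A]
    (r : S × A → ℝ) (rmax : ℝ) (hr : ∀ sa, |r sa| ≤ rmax)
    (γ : ℝ) (hγ : γ ∈ Set.Ioo (0 : ℝ) 1)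
    (P : S × A → S → ℝ) (hP0 : ∀ sa s', 0 ≤ P sa s') (hP1 : ∀ sa, ∑ s', P sa s' = 1)
    (τ : ℝ) (hτ : 0 < τ) (k : ℕ) (hk : 1 ≤ k)
    (π : ℕ → S → A → ℝ) (q : ℕ → S × A → ℝ) (ε : ℕ → S × A → ℝ)
    (hπ0 : ∀ s a, π 0 s a = 1 / (Fintype.card A : ℝ))
    (hπ : ∀ j s a, π (j + 1) s a
      = Real.exp (q j (s, a) / τ) / ∑ a', Real.exp (q j (s, a') / τ))
    (hq : ∀ j s a, q (j + 1) (s, a)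
      = r (s, a) + 1 * τ * Real.log (π (j + 1) s a)
        + γ * ∑ s', P (s, a) s' *
            (∑ a', π (j + 1) s' a' * (q j (s', a') - τ * Real.log (π (j + 1) s' a')))
        + ε (j + 1) (s, a))
    (hq0 : ∀ s a, |q 0 (s, a) - τ * Real.log (π 0 s a)| ≤ rmax / (1 - γ))
    (hbd : ∀ j, 1 ≤ j → j ≤ k →
      ∀ s a, |q j (s, a) - τ * Real.log (π j s a)| ≤ rmax / (1 - γ))
    (qstar : S × A → ℝ)
    (hqstar : ∀ s a, qstar (s, a)
      = r (s, a) + γ * ∑ s', P (s, a) s' *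
          (Finset.univ.sup' Finset.univ_nonempty fun a' => qstar (s', a')))
    (qπk : S × A → ℝ)
    (hqπk : ∀ s a, qπk (s, a)
      = r (s, a) + γ * ∑ s', P (s, a) s' * (∑ a', π k s' a' * qπk (s', a'))) :
    (Finset.univ.sup' Finset.univ_nonempty fun x : S × A => |qstar x - qπk x|)
      ≤ 2 / (1 - γ) *
          (Finset.univ.sup' Finset.univ_nonempty fun x : S × A =>
            |(1 / (k : ℝ)) * ∑ j ∈ Finset.Icc 1 k, ε j x|)
        + 4 / (1 - γ) ^ 2 * ((rmax + τ * Real.log (Fintype.card A)) / (k : ℝ)) := by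
  obtain ⟨hγ0, hγ1⟩ := hγ
  have h1γ : (0:ℝ) < 1 - γ := by linarith
  have hk0 : (0:ℝ) < (k:ℝ) := by exact_mod_cast Nat.lt_of_lt_of_le Nat.zero_lt_one hk
  have hrmax0 : (0:ℝ) ≤ rmax := le_trans (abs_nonneg _) (hr (Classical.arbitrary _))
  have hcA1 : (1:ℝ) ≤ (Fintype.card A : ℝ) := by exact_mod_cast Fintype.card_pos
  have hTL0 : 0 ≤ τ * Real.log (Fintype.card A) :=
    mul_nonneg (le_of_lt hτ) (Real.log_nonneg hcA1)
  set M : ℝ := rmax / (1 - γ) with hMdef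
  have hM0 : 0 ≤ M := div_nonneg hrmax0 (le_of_lt h1γ)
  have hq'bd : ∀ j, j ≤ k → ∀ s a, |q j (s, a) - τ * Real.log (π j s a)| ≤ M := by
    intro j hj s a
    rcases Nat.eq_zero_or_pos j with h | h
    · subst h; exact hq0 s a
    · exact hbd j h hj s a
  -- log-partition facts
  have hΛ0 : ∀ s : S, Λf τ π q 0 s = τ * Real.log (Fintype.card A) := by
    intro s
    simp [Λf, Tf]
  have hΛge : ∀ (j : ℕ) (s : S) (a : A), Tf τ π q j (s, a) ≤ Λf τ π q j s := by
    intro j s a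
    have h1 : Real.exp (Tf τ π q j (s, a) / τ) ≤ ∑ a', Real.exp (Tf τ π q j (s, a') / τ) :=
      Finset.single_le_sum (f := fun a' => Real.exp (Tf τ π q j (s, a') / τ))
        (fun _ _ => le_of_lt (Real.exp_pos _)) (Finset.mem_univ a)
    have h2 : Tf τ π q j (s, a) / τ ≤ Real.log (∑ a', Real.exp (Tf τ π q j (s, a') / τ)) := by
      rw [← Real.log_exp (Tf τ π q j (s, a) / τ)]
      exact Real.log_le_log (Real.exp_pos _) h1
    have h3 := mul_le_mul_of_nonneg_left h2 (le_of_lt hτ)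
    have h4 : τ * (Tf τ π q j (s, a) / τ) = Tf τ π q j (s, a) := by field_simp
    have h5 : Λf τ π q j s = τ * Real.log (∑ a', Real.exp (Tf τ π q j (s, a') / τ)) := rfl
    linarith
  have hΛle : ∀ s : S, Λf τ π q k s
      ≤ (∑ a, π k s a * Tf τ π q k (s, a)) + τ * Real.log (Fintype.card A) := by
    intro s
    have hpos : ∀ a, 0 < π k s a := fun a => pi_pos τ hτ π q hπ0 hπ k s a
    have hsum : ∑ a, π k s a = 1 := pi_sum τ hτ π q hπ0 hπ k s
    have hent := entropy_le (fun a => π k s a) hpos hsum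
    have h2 : Λf τ π q k s - ∑ a, π k s a * Tf τ π q k (s, a)
        = τ * ∑ a, π k s a * (-Real.log (π k s a)) := by
      have e1 : Λf τ π q k s = ∑ a, π k s a * Λf τ π q k s := by
        rw [← Finset.sum_mul, hsum, one_mul]
      calc Λf τ π q k s - ∑ a, π k s a * Tf τ π q k (s, a)
          = ∑ a, (π k s a * Λf τ π q k s - π k s a * Tf τ π q k (s, a)) := by
            rw [Finset.sum_sub_distrib, ← e1]
        _ = ∑ a, τ * (π k s a * (-Real.log (π k s a))) := by
            refine Finset.sum_congr rfl fun a _ => ?_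
            have hl := log_form τ hτ π q hπ0 hπ k s a
            have e : Λf τ π q k s - Tf τ π q k (s, a) = τ * (-Real.log (π k s a)) := by
              linarith
            rw [← mul_sub, e]; ring
        _ = τ * ∑ a, π k s a * (-Real.log (π k s a)) := by rw [Finset.mul_sum]
    have h3 := mul_le_mul_of_nonneg_left hent (le_of_lt hτ)
    linarith
  -- main quantities
  set u : S × A → ℝ := fun x => (k:ℝ) * qstar x - Tf τ π q (k+1) x with hu_def
  set d : S × A → ℝ := fun x => Tf τ π q (k+1) x - (k:ℝ) * qπk x with hd_def
  set z : S × A → ℝ := fun x => qπk x - qstar x with hz_def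
  set vstar : S → ℝ :=
    fun s => Finset.univ.sup' Finset.univ_nonempty fun a => qstar (s, a) with hv_def
  set F : ℝ := Finset.univ.sup' Finset.univ_nonempty
      (fun x : S × A => |(1 / (k : ℝ)) * ∑ j ∈ Finset.Icc 1 k, ε j x|) with hF_def
  set E : S × A → ℝ := fun x => ∑ j ∈ Finset.Icc 1 k, ε j x with hE_def
  have hqstar' : ∀ s a, qstar (s, a)
      = r (s, a) + γ * ∑ s', P (s, a) s' * vstar s' := fun s a => hqstar s a
  have hF0 : 0 ≤ F :=
    le_trans (abs_nonneg _)
      (Finset.le_sup' (fun x : S × A => |(1 / (k : ℝ)) * ∑ j ∈ Finset.Icc 1 k, ε j x|)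
        (Finset.mem_univ (Classical.arbitrary (S × A))))
  have hEabs : ∀ x : S × A, |E x| ≤ (k:ℝ) * F := by
    intro x
    have h1 : |(1 / (k : ℝ)) * ∑ j ∈ Finset.Icc 1 k, ε j x| ≤ F :=
      Finset.le_sup' (fun x : S × A => |(1 / (k : ℝ)) * ∑ j ∈ Finset.Icc 1 k, ε j x|)
        (Finset.mem_univ x)
    have h2 : |(1 / (k : ℝ)) * ∑ j ∈ Finset.Icc 1 k, ε j x| = |E x| / k := by
      rw [abs_mul, abs_of_pos (by positivity : (0:ℝ) < 1 / (k:ℝ))]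
      rw [hE_def]
      ring
    rw [h2, div_le_iff₀ hk0] at h1
    linarith
  have hEbd : ∀ x : S × A, E x ≤ (k:ℝ) * F :=
    fun x => le_trans (le_abs_self _) (hEabs x)
  have hEbd' : ∀ x : S × A, -E x ≤ (k:ℝ) * F :=
    fun x => le_trans (neg_le_abs _) (hEabs x)
  have htel : ∀ s a, Tf τ π q (k+1) (s, a)
      = (q 0 (s, a) - τ * Real.log (π 0 s a)) + (k : ℝ) * r (s, a)
        + γ * ∑ s', P (s, a) s' * (Λf τ π q k s' - Λf τ π q 0 s')
        + E (s, a) := fun s a => telescope τ hτ π q hπ0 hπ r γ P ε hq k s a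
  -- sup-norm abbreviations
  have hGu := fun (c : ℝ)
      (h : ∀ x, u x ≤ γ * Finset.univ.sup' Finset.univ_nonempty u + c) => contr u γ c h
  -- Bound 1 : (1-γ) * sup u ≤ γM + γTL + M + kF
  have hub : (1 - γ) * Finset.univ.sup' Finset.univ_nonempty u
      ≤ γ * M + γ * (τ * Real.log (Fintype.card A)) + M + (k:ℝ) * F := by
    refine contr u γ _ ?_
    rintro ⟨s, a⟩
    have hfac : ∀ s' : S, (k:ℝ) * vstar s' - Λf τ π q k s' + Λf τ π q 0 s'
        ≤ Finset.univ.sup' Finset.univ_nonempty u + M + τ * Real.log (Fintype.card A) := by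
      intro s'
      obtain ⟨a2, -, ha⟩ := Finset.exists_mem_eq_sup'
        (Finset.univ_nonempty (α := A)) (fun a => qstar (s', a))
      have hv : vstar s' = qstar (s', a2) := ha
      have h1 : (k:ℝ) * vstar s' - Λf τ π q k s'
          ≤ (k:ℝ) * qstar (s', a2) - Tf τ π q k (s', a2) := by
        have := hΛge k s' a2
        rw [hv]
        linarith
      have h2 : (k:ℝ) * qstar (s', a2) - Tf τ π q k (s', a2)
          = u (s', a2) + (q k (s', a2) - τ * Real.log (π k s' a2)) := by
        have ht := Tf_succ τ π q k (s', a2)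
        simp only [hu_def]
        simp only [] at ht
        linarith
      have h3 : u (s', a2) ≤ Finset.univ.sup' Finset.univ_nonempty u :=
        Finset.le_sup' u (Finset.mem_univ _)
      have h4 : q k (s', a2) - τ * Real.log (π k s' a2) ≤ M :=
        (abs_le.mp (hq'bd k le_rfl s' a2)).2
      have h5 : Λf τ π q 0 s' = τ * Real.log (Fintype.card A) := hΛ0 s'
      linarith
    have havg : ∑ s', P (s, a) s' * ((k:ℝ) * vstar s' - Λf τ π q k s' + Λf τ π q 0 s')
        ≤ Finset.univ.sup' Finset.univ_nonempty u + M + τ * Real.log (Fintype.card A) :=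
      avg_le _ _ _ (hP0 (s, a)) (hP1 (s, a)) hfac
    have hdecomp : ∑ s', P (s, a) s' * ((k:ℝ) * vstar s' - Λf τ π q k s' + Λf τ π q 0 s')
        = (k:ℝ) * (∑ s', P (s, a) s' * vstar s')
          - (∑ s', P (s, a) s' * (Λf τ π q k s' - Λf τ π q 0 s')) := by
      calc ∑ s', P (s, a) s' * ((k:ℝ) * vstar s' - Λf τ π q k s' + Λf τ π q 0 s')
          = ∑ s', ((k:ℝ) * (P (s, a) s' * vstar s')
              - P (s, a) s' * (Λf τ π q k s' - Λf τ π q 0 s')) :=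
            Finset.sum_congr rfl fun s' _ => by ring
        _ = _ := by rw [Finset.sum_sub_distrib, ← Finset.mul_sum]
    have hq'0 : -(q 0 (s, a) - τ * Real.log (π 0 s a)) ≤ M := by
      have := (abs_le.mp (hq'bd 0 (Nat.zero_le _) s a)).1; linarith
    have hEx : -E (s, a) ≤ (k:ℝ) * F := hEbd' (s, a)
    have hexp : u (s, a)
        = γ * (∑ s', P (s, a) s' * ((k:ℝ) * vstar s' - Λf τ π q k s' + Λf τ π q 0 s'))
          - (q 0 (s, a) - τ * Real.log (π 0 s a)) - E (s, a) := by
      simp only [hu_def]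
      rw [hqstar' s a, htel s a, hdecomp]
      ring
    have hγavg := mul_le_mul_of_nonneg_left havg (le_of_lt hγ0)
    rw [hexp]
    linarith
  -- Bound 2 : (1-γ) * sup d ≤ M + γM + kF
  have hdb : (1 - γ) * Finset.univ.sup' Finset.univ_nonempty d
      ≤ M + γ * M + (k:ℝ) * F := by
    refine contr d γ _ ?_
    rintro ⟨s, a⟩
    have hfac : ∀ s' : S,
        Λf τ π q k s' - (k:ℝ) * ∑ a', π k s' a' * qπk (s', a')
        ≤ Finset.univ.sup' Finset.univ_nonempty d + M + τ * Real.log (Fintype.card A) := by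
      intro s'
      have h1 := hΛle s'
      have hpos : ∀ a', (0:ℝ) ≤ π k s' a' :=
        fun a' => le_of_lt (pi_pos τ hτ π q hπ0 hπ k s' a')
      have hsum : ∑ a', π k s' a' = 1 := pi_sum τ hτ π q hπ0 hπ k s'
      have h2 : ∑ a', π k s' a' * (Tf τ π q k (s', a') - (k:ℝ) * qπk (s', a'))
          ≤ Finset.univ.sup' Finset.univ_nonempty d + M := by
        refine avg_le _ _ _ hpos hsum ?_
        intro a'
        have ht := Tf_succ τ π q k (s', a')
        have h3 : d (s', a') ≤ Finset.univ.sup' Finset.univ_nonempty d :=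
          Finset.le_sup' d (Finset.mem_univ _)
        have h4 : -(q k (s', a') - τ * Real.log (π k s' a')) ≤ M := by
          have := (abs_le.mp (hq'bd k le_rfl s' a')).1; linarith
        have h5 : Tf τ π q k (s', a') - (k:ℝ) * qπk (s', a')
            = d (s', a') - (q k (s', a') - τ * Real.log (π k s' a')) := by
          simp only [hd_def]
          simp only [] at ht
          linarith
        linarith
      have e2 : ∑ a', π k s' a' * Tf τ π q k (s', a')
            - (k:ℝ) * ∑ a', π k s' a' * qπk (s', a')
          = ∑ a', π k s' a' * (Tf τ π q k (s', a') - (k:ℝ) * qπk (s', a')) := by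
        calc ∑ a', π k s' a' * Tf τ π q k (s', a')
              - (k:ℝ) * ∑ a', π k s' a' * qπk (s', a')
            = ∑ a', (π k s' a' * Tf τ π q k (s', a')
                - (k:ℝ) * (π k s' a' * qπk (s', a'))) := by
              rw [Finset.sum_sub_distrib, ← Finset.mul_sum]
          _ = _ := Finset.sum_congr rfl fun a' _ => by ring
      linarith
    have havg : ∑ s', P (s, a) s' *
          (Λf τ π q k s' - (k:ℝ) * ∑ a', π k s' a' * qπk (s', a'))
        ≤ Finset.univ.sup' Finset.univ_nonempty d + M + τ * Real.log (Fintype.card A) :=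
      avg_le _ _ _ (hP0 (s, a)) (hP1 (s, a)) hfac
    have hX0 : ∑ s', P (s, a) s' * Λf τ π q 0 s' = τ * Real.log (Fintype.card A) := by
      calc ∑ s', P (s, a) s' * Λf τ π q 0 s'
          = ∑ s', P (s, a) s' * (τ * Real.log (Fintype.card A)) :=
            Finset.sum_congr rfl fun s' _ => by rw [hΛ0 s']
        _ = _ := by rw [← Finset.sum_mul, hP1, one_mul]
    have hdecomp : ∑ s', P (s, a) s' *
          (Λf τ π q k s' - (k:ℝ) * ∑ a', π k s' a' * qπk (s', a'))
        = (∑ s', P (s, a) s' * (Λf τ π q k s' - Λf τ π q 0 s'))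
          + τ * Real.log (Fintype.card A)
          - (k:ℝ) * (∑ s', P (s, a) s' * (∑ a', π k s' a' * qπk (s', a'))) := by
      calc ∑ s', P (s, a) s' *
            (Λf τ π q k s' - (k:ℝ) * ∑ a', π k s' a' * qπk (s', a'))
          = ∑ s', (P (s, a) s' * (Λf τ π q k s' - Λf τ π q 0 s')
              + P (s, a) s' * Λf τ π q 0 s'
              - (k:ℝ) * (P (s, a) s' * (∑ a', π k s' a' * qπk (s', a')))) :=
            Finset.sum_congr rfl fun s' _ => by ring
        _ = _ := by
            rw [Finset.sum_sub_distrib, Finset.sum_add_distrib, ← Finset.mul_sum, hX0]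
    have hq'0 : (q 0 (s, a) - τ * Real.log (π 0 s a)) ≤ M :=
      (abs_le.mp (hq'bd 0 (Nat.zero_le _) s a)).2
    have hEx : E (s, a) ≤ (k:ℝ) * F := hEbd (s, a)
    have hexp : d (s, a)
        = (q 0 (s, a) - τ * Real.log (π 0 s a))
          + γ * (∑ s', P (s, a) s' *
              (Λf τ π q k s' - (k:ℝ) * ∑ a', π k s' a' * qπk (s', a')))
          - γ * (τ * Real.log (Fintype.card A)) + E (s, a) := by
      simp only [hd_def]
      rw [htel s a, hqπk s a, hdecomp]
      ring
    have hγavg := mul_le_mul_of_nonneg_left havg (le_of_lt hγ0)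
    rw [hexp]
    linarith
  -- Bound 3 : sup z ≤ 0
  have hzb : (1 - γ) * Finset.univ.sup' Finset.univ_nonempty z ≤ 0 := by
    refine contr z γ _ ?_
    rintro ⟨s, a⟩
    have hfac : ∀ s' : S, (∑ a', π k s' a' * qπk (s', a')) - vstar s'
        ≤ Finset.univ.sup' Finset.univ_nonempty z := by
      intro s'
      have hpos : ∀ a', (0:ℝ) ≤ π k s' a' :=
        fun a' => le_of_lt (pi_pos τ hτ π q hπ0 hπ k s' a')
      have hsum : ∑ a', π k s' a' = 1 := pi_sum τ hτ π q hπ0 hπ k s'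
      have h1 : ∑ a', π k s' a' * qstar (s', a') ≤ vstar s' := by
        refine avg_le _ _ _ hpos hsum ?_
        intro a'
        exact Finset.le_sup' (fun a => qstar (s', a)) (Finset.mem_univ a')
      have h2 : ∑ a', π k s' a' * z (s', a')
          ≤ Finset.univ.sup' Finset.univ_nonempty z := by
        refine avg_le _ _ _ hpos hsum ?_
        intro a'
        exact Finset.le_sup' z (Finset.mem_univ _)
      have h3 : ∑ a', π k s' a' * z (s', a')
          = ∑ a', π k s' a' * qπk (s', a') - ∑ a', π k s' a' * qstar (s', a') := by
        rw [← Finset.sum_sub_distrib]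
        exact Finset.sum_congr rfl fun a' _ => by simp only [hz_def]; ring
      linarith
    have havg : ∑ s', P (s, a) s' * ((∑ a', π k s' a' * qπk (s', a')) - vstar s')
        ≤ Finset.univ.sup' Finset.univ_nonempty z :=
      avg_le _ _ _ (hP0 (s, a)) (hP1 (s, a)) hfac
    have hdecomp : ∑ s', P (s, a) s' * ((∑ a', π k s' a' * qπk (s', a')) - vstar s')
        = (∑ s', P (s, a) s' * (∑ a', π k s' a' * qπk (s', a')))
          - ∑ s', P (s, a) s' * vstar s' := by
      rw [← Finset.sum_sub_distrib]
      exact Finset.sum_congr rfl fun s' _ => by ring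
    have hexp : z (s, a)
        = γ * ∑ s', P (s, a) s' * ((∑ a', π k s' a' * qπk (s', a')) - vstar s') := by
      simp only [hz_def]
      rw [hqπk s a, hqstar' s a, hdecomp]
      ring
    have hγavg := mul_le_mul_of_nonneg_left havg (le_of_lt hγ0)
    rw [hexp]
    linarith
  -- final assembly
  refine Finset.sup'_le _ _ ?_
  rintro ⟨s, a⟩ -
  have hz1 : qπk (s, a) - qstar (s, a) ≤ 0 := by
    have h1 : z (s, a) ≤ Finset.univ.sup' Finset.univ_nonempty z :=
      Finset.le_sup' z (Finset.mem_univ _)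
    have h2 : Finset.univ.sup' Finset.univ_nonempty z ≤ 0 := by
      nlinarith
    simpa [hz_def] using le_trans h1 h2
  have habs : |qstar (s, a) - qπk (s, a)| = qstar (s, a) - qπk (s, a) :=
    abs_of_nonneg (by linarith)
  show |qstar (s, a) - qπk (s, a)| ≤ _
  rw [habs]
  have h1 : u (s, a) ≤ Finset.univ.sup' Finset.univ_nonempty u :=
    Finset.le_sup' u (Finset.mem_univ _)
  have h2 : d (s, a) ≤ Finset.univ.sup' Finset.univ_nonempty d :=
    Finset.le_sup' d (Finset.mem_univ _)
  have hsum : (k:ℝ) * (qstar (s, a) - qπk (s, a)) = u (s, a) + d (s, a) := by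
    simp only [hu_def, hd_def]; ring
  have key : (1 - γ) * ((k:ℝ) * (qstar (s, a) - qπk (s, a)))
      ≤ 2 * (k:ℝ) * F + 2 * (1 + γ) * M + γ * (τ * Real.log (Fintype.card A)) := by
    have t1 : (1 - γ) * ((k:ℝ) * (qstar (s, a) - qπk (s, a)))
        ≤ (1 - γ) * (Finset.univ.sup' Finset.univ_nonempty u
            + Finset.univ.sup' Finset.univ_nonempty d) := by
      apply mul_le_mul_of_nonneg_left _ (le_of_lt h1γ)
      rw [hsum]
      exact add_le_add h1 h2
    have t2 : (1 - γ) * (Finset.univ.sup' Finset.univ_nonempty u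
        + Finset.univ.sup' Finset.univ_nonempty d)
        = (1 - γ) * Finset.univ.sup' Finset.univ_nonempty u
          + (1 - γ) * Finset.univ.sup' Finset.univ_nonempty d := by ring
    linarith [t1, hub, hdb]
  have hMr : (1 - γ) * M = rmax := by
    rw [hMdef]; field_simp
  have hRHS : 2 / (1 - γ) * F
      + 4 / (1 - γ) ^ 2 * ((rmax + τ * Real.log (Fintype.card A)) / (k : ℝ))
      = (2 * (1 - γ) * (k:ℝ) * F + 4 * (rmax + τ * Real.log (Fintype.card A)))
        / ((1 - γ) ^ 2 * (k:ℝ)) := by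
    field_simp
  rw [hRHS, le_div_iff₀ (by positivity)]
  have key2 := mul_le_mul_of_nonneg_left key (le_of_lt h1γ)
  nlinarith [key2, hTL0, hrmax0, hF0, hMr,
    mul_nonneg (le_of_lt hγ0) hrmax0,
    mul_nonneg (mul_nonneg (le_of_lt hγ0) (le_of_lt h1γ)) hTL0,
    mul_nonneg (le_of_lt hγ0) (mul_nonneg (le_of_lt hk0) hF0)]
end
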